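/- arXiv:1709.03908 — 9 statements merged into one kernel-verified Lean document; each statement's English description precedes it below -/
import Mathlib

section
/- Let q be a prime power and m, n positive integers. If C is a subset of the space of m×n matrices over F_q with at least two elements and minimum rank distance d, then the cardinality of C is at most q^{max(m,n)·(min(m,n)−d+1)}. -/
open Matrix

/-- A nonzero matrix over a field has positive rank. -/
lemma rank_pos_of_ne_zero {m n : ℕ} {F : Type*} [Field F]
    (A : Matrix (Fin m) (Fin n) F) (hA : A ≠ 0) : 0 < A.rank := by
  rcases Nat.eq_zero_or_pos A.rank with h | h
  · exfalso
    apply hA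
    have : LinearMap.range A.mulVecLin = ⊥ := by
      rw [← Submodule.finrank_eq_zero (R := F)]
      exact h
    have hz : A.mulVecLin = 0 := LinearMap.range_eq_bot.mp this
    ext i j
    have h2 : A.mulVecLin (Pi.single j 1) = 0 := by rw [hz]; rfl
    have h3 := congrFun h2 i
    simpa [Matrix.mulVecLin_apply, Matrix.mulVec_single_one] using h3
  · exact h

/-- If the first `k` rows of a matrix vanish, its rank is at most `m - k`. -/
lemma rank_le_of_top_rows_zero {m n k : ℕ} {F : Type*} [Field F] (hk : k ≤ m)
    (D : Matrix (Fin m) (Fin n) F) (h : ∀ i : Fin m, (i : ℕ) < k → D i = 0) :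
    D.rank ≤ m - k := by
  set e : Fin (m - k) → Fin m := fun j => ⟨k + j, by omega⟩ with he
  set B : Matrix (Fin (m - k)) (Fin n) F := D.submatrix e id with hB
  set P : Matrix (Fin m) (Fin (m - k)) F := Matrix.of fun i j => if i = e j then 1 else 0
    with hP
  have hD : D = P * B := by
    ext i l
    rw [Matrix.mul_apply]
    rcases lt_or_ge (i : ℕ) k with hik | hik
    · have h0 : D i l = 0 := by rw [h i hik]; rfl
      rw [h0]
      symm
      apply Finset.sum_eq_zero
      intro j _
      have : i ≠ e j := by
        intro hij
        have : (i : ℕ) = k + j := congrArg Fin.val hij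
        omega
      simp [hP, this]
    · have hjm : (i : ℕ) - k < m - k := by omega
      rw [Finset.sum_eq_single ⟨(i : ℕ) - k, hjm⟩]
      · have hie : i = e ⟨(i : ℕ) - k, hjm⟩ := by
          apply Fin.ext
          simp [he]
          omega
        simp [hP, hB, ← hie]
      · intro b _ hb
        have : i ≠ e b := by
          intro hib
          apply hb
          apply Fin.ext
          have : (i : ℕ) = k + b := congrArg Fin.val hib
          simp
          omega
        simp [hP, this]
      · intro habs; exact absurd (Finset.mem_univ _) habs
  calc D.rank = (P * B).rank := by rw [← hD]
    _ ≤ B.rank := Matrix.rank_mul_le_right P B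
    _ ≤ m - k := Matrix.rank_le_height B

/-- Auxiliary Singleton-like bound in the case `d ≥ 1` and `d ≤ m`. -/
lemma singleton_aux {q m n d : ℕ} {F : Type*} [Field F] [Fintype F]
    (hF : Fintype.card F = q) (hd1 : 1 ≤ d) (hdm : d ≤ m)
    (C : Finset (Matrix (Fin m) (Fin n) F))
    (hmin : ∀ A ∈ C, ∀ B ∈ C, A ≠ B → d ≤ (A - B).rank) :
    C.card ≤ q ^ (n * (m - d + 1)) := by
  set k := m - d + 1 with hk
  have hkm : k ≤ m := by omega
  classical
  set f : Matrix (Fin m) (Fin n) F → Matrix (Fin k) (Fin n) F :=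
    fun A => Matrix.of fun i j => A (Fin.castLE hkm i) j with hf
  have hinj : Set.InjOn f C := by
    intro A hA B hB hAB
    by_contra hne
    have hd := hmin A hA B hB hne
    have hz : ∀ i : Fin m, (i : ℕ) < k → (A - B) i = 0 := by
      intro i hik
      funext j
      have := congrFun (congrFun hAB ⟨(i : ℕ), hik⟩) j
      simp only [hf, Matrix.of_apply] at this
      have hcast : Fin.castLE hkm ⟨(i : ℕ), hik⟩ = i := rfl
      rw [hcast] at this
      simp [this]
    have := rank_le_of_top_rows_zero hkm (A - B) hz
    omega
  have hcard : C.card ≤ Fintype.card (Matrix (Fin k) (Fin n) F) := by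
    rw [← Finset.card_univ]
    exact Finset.card_le_card_of_injOn f (fun _ _ => Finset.mem_univ _) hinj
  have : Fintype.card (Matrix (Fin k) (Fin n) F) = q ^ (n * k) := by
    rw [Fintype.card_congr ((Matrix.of).symm : Matrix (Fin k) (Fin n) F ≃ (Fin k → Fin n → F))]
    simp [hF, pow_mul, mul_comm]
  omega

/-- Singleton-like bound for the rank metric: a code `C` in the space of `m × n`
matrices over a finite field `F` of cardinality `q`, with at least two elements and
minimum rank distance `d`, satisfies `|C| ≤ q ^ (max m n * (min m n - d + 1))`. -/
theorem singleton_like_bound (q m n d : ℕ) (hm : 0 < m) (hn : 0 < n)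
    (F : Type*) [Field F] [Fintype F] (hF : Fintype.card F = q)
    (C : Finset (Matrix (Fin m) (Fin n) F)) (h2 : 2 ≤ C.card)
    (hmin : ∀ A ∈ C, ∀ B ∈ C, A ≠ B → d ≤ (A - B).rank)
    (hach : ∃ A ∈ C, ∃ B ∈ C, A ≠ B ∧ (A - B).rank = d) :
    C.card ≤ q ^ (max m n * (min m n - d + 1)) := by
  classical
  obtain ⟨A, hA, B, hB, hne, hrank⟩ := hach
  have hABne : A - B ≠ 0 := fun h => hne (sub_eq_zero.mp h)
  have hd1 : 1 ≤ d := by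
    have := rank_pos_of_ne_zero (A - B) hABne
    omega
  have hdm : d ≤ m := by
    have := Matrix.rank_le_height (A - B)
    omega
  have hdn : d ≤ n := by
    have := Matrix.rank_le_width (A - B)
    omega
  rcases le_total m n with hmn | hnm
  · rw [max_eq_right hmn, min_eq_left hmn]
    exact singleton_aux hF hd1 hdm C hmin
  · rw [max_eq_left hnm, min_eq_right hnm]
    set C' : Finset (Matrix (Fin n) (Fin m) F) := C.image Matrix.transpose with hC'
    have hcardeq : C'.card = C.card :=
      Finset.card_image_of_injective C Matrix.transpose_injective
    have hmin' : ∀ A' ∈ C', ∀ B' ∈ C', A' ≠ B' → d ≤ (A' - B').rank := by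
      intro A' hA' B' hB' hne'
      obtain ⟨A₀, hA₀, rfl⟩ := Finset.mem_image.mp hA'
      obtain ⟨B₀, hB₀, rfl⟩ := Finset.mem_image.mp hB'
      have hne₀ : A₀ ≠ B₀ := fun h => hne' (by rw [h])
      have : (A₀ᵀ - B₀ᵀ) = (A₀ - B₀)ᵀ := by ext i j; simp
      rw [this, Matrix.rank_transpose]
      exact hmin A₀ hA₀ B₀ hB₀ hne₀
    have := singleton_aux hF hd1 hdn C' hmin'
    omega
end

section
/- Let s and m be coprime positive integers and let f = f_0 X + f_1 X^{q^s} + ... + f_k X^{q^{sk}} be a q^s-linearized polynomial over F_{q^m} with f_k ≠ 0. If f has exactly q^k roots in F_{q^m}, then N_{q^{sm}/q^s}(f_0) = (−1)^{km} · N_{q^{sm}/q^s}(f_k), where N_{q^{sm}/q^s}(x) = x^{(q^{sm}−1)/(q^s−1)} is the norm. -/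
open Finset

section
variable (q s m : ℕ) (K : Type*) [Field K] [Fintype K]

lemma myPowCard (hK : Fintype.card K = q ^ m) (x : K) : x ^ q ^ m = x := by
  rw [← hK]; exact FiniteField.pow_card x

lemma myPowCardMul (hK : Fintype.card K = q ^ m) (x : K) (t : ℕ) : x ^ q ^ (m * t) = x := by
  induction t with
  | zero => simp
  | succ t ih =>
    have : q ^ (m * (t+1)) = q ^ (m * t) * q ^ m := by rw [← pow_add]; ring_nf
    rw [this, pow_mul, ih, myPowCard q m K hK]

lemma myFix (hm : 0 < m) (hsm : Nat.Coprime s m) (hK : Fintype.card K = q ^ m)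
    (z : K) (hz : z ^ q ^ s = z) : z ^ q = z := by
  have hzt : ∀ t, z ^ q ^ (s * t) = z := by
    intro t
    induction t with
    | zero => simp
    | succ t ih =>
      have : q ^ (s * (t+1)) = q ^ (s * t) * q ^ s := by rw [← pow_add]; ring_nf
      rw [this, pow_mul, ih, hz]
  rcases eq_or_lt_of_le (show 1 ≤ m from hm) with h1 | h1
  · have := myPowCard q m K hK z
    rw [← h1, pow_one] at this
    exact this
  · obtain ⟨a, -, ha⟩ := Nat.exists_mul_mod_eq_one_of_coprime hsm h1
    have hdm : s * a = m * (s * a / m) + s * a % m := (Nat.div_add_mod _ _).symm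
    have h2 : z ^ q ^ (s * a) = z ^ q := by
      rw [hdm, pow_add, pow_mul, myPowCardMul q m K hK, ha, pow_one]
    rw [← h2, hzt a]

lemma myFixCard (hq : 2 ≤ q) : {z : K | z ^ q = z}.ncard ≤ q := by
  classical
  have hP0 : (Polynomial.X ^ q - Polynomial.X : Polynomial K) ≠ 0 := by
    intro h
    have h2 : (Polynomial.X ^ q - Polynomial.X : Polynomial K).coeff q = 1 := by
      rw [Polynomial.coeff_sub, Polynomial.coeff_X_pow, Polynomial.coeff_X]
      simp only [if_pos rfl, Polynomial.coeff_X, if_neg (by omega : ¬ 1 = q), sub_zero]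
      simp
    rw [h] at h2; simp at h2
  set P : Polynomial K := Polynomial.X ^ q - Polynomial.X with hP
  have hdeg : P.natDegree ≤ q := by
    refine le_trans (Polynomial.natDegree_sub_le _ _) ?_
    simp [Polynomial.natDegree_X_pow, Polynomial.natDegree_X]
    omega
  have hsub : {z : K | z ^ q = z} ⊆ (P.roots.toFinset : Set K) := by
    intro z hz
    simp only [Set.mem_setOf_eq] at hz
    simp only [Finset.coe_sort_coe, Finset.mem_coe, Multiset.mem_toFinset]
    rw [Polynomial.mem_roots hP0]
    rw [hP]
    simp [Polynomial.IsRoot, sub_eq_zero, hz]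
  calc {z : K | z ^ q = z}.ncard ≤ (P.roots.toFinset : Set K).ncard :=
        Set.ncard_le_ncard hsub (Set.toFinite _)
    _ = P.roots.toFinset.card := Set.ncard_coe_finset _
    _ ≤ Multiset.card P.roots := Multiset.toFinset_card_le _
    _ ≤ P.natDegree := Polynomial.card_roots' P
    _ ≤ q := hdeg

lemma myCount (c : ℕ) (D : K → K) (A : Set K)
    (hfib : ∀ y, {x : K | D x = y}.ncard ≤ c) : A.ncard ≤ c * (D '' A).ncard := by
  classical
  have hA : A.Finite := A.toFinite
  have h1 : A.ncard = hA.toFinset.card := Set.ncard_eq_toFinset_card _ hA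
  have h2 : (D '' A).ncard = (hA.toFinset.image D).card := by
    rw [← Set.ncard_coe_finset]
    congr 1
    rw [Finset.coe_image, Set.Finite.coe_toFinset]
  rw [h1, h2]
  refine Finset.card_le_mul_card_image _ c ?_
  intro y _
  calc (hA.toFinset.filter (fun x => D x = y)).card
      = ((hA.toFinset.filter (fun x => D x = y) : Finset K) : Set K).ncard :=
        (Set.ncard_coe_finset _).symm
    _ ≤ {x : K | D x = y}.ncard := by
        refine Set.ncard_le_ncard ?_ (Set.toFinite _)
        intro x hx
        simp only [Finset.coe_filter, Set.mem_setOf_eq] at hx ⊢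
        exact hx.2
    _ ≤ c := hfib y


lemma myAux (hq : 2 ≤ q) (hs : 0 < s) (hm : 0 < m) (hsm : Nat.Coprime s m)
    (hK : Fintype.card K = q ^ m)
    (p e : ℕ) (hp : Fact (Nat.Prime p)) [CharP K p] (he : q = p ^ e) :
    ∀ k (f : ℕ → K), f k ≠ 0 →
      q ^ k ≤ {x : K | ∑ i ∈ Finset.range (k + 1), f i * x ^ q ^ (s * i) = 0}.ncard →
      {x : K | ∑ i ∈ Finset.range (k + 1), f i * x ^ q ^ (s * i) = 0}.ncard = q ^ k ∧
      f 0 ^ (∑ i ∈ Finset.range m, (q ^ s) ^ i)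
        = (-1) ^ (k * m) * f k ^ (∑ i ∈ Finset.range m, (q ^ s) ^ i) := by
  have hq0 : (0:ℕ) < q := by omega
  -- Frobenius
  have hfrob : ∀ (n : ℕ) (u v : K), (u - v) ^ q ^ n = u ^ q ^ n - v ^ q ^ n := by
    intro n u v
    rw [he, ← pow_mul]
    exact sub_pow_char_pow u v (e * n)
  have hneg : ∀ (n : ℕ), (-1 : K) ^ q ^ n = -1 := by
    intro n
    have := hfrob n 0 1
    simpa [zero_pow (by positivity : q ^ n ≠ 0)] using this
  intro k
  induction k with
  | zero =>
    intro f hf0 _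
    constructor
    · have hset : {x : K | ∑ i ∈ Finset.range 1, f i * x ^ q ^ (s * i) = 0} = {0} := by
        ext x
        simp [Finset.sum_range_one, mul_eq_zero, hf0]
      rw [hset]
      simp
    · simp
  | succ k ih =>
    intro f hfk hge
    set E := ∑ i ∈ Finset.range m, (q ^ s) ^ i with hE
    set S := {x : K | ∑ i ∈ Finset.range (k + 1 + 1), f i * x ^ q ^ (s * i) = 0} with hS
    -- find a nonzero root β
    have hS2 : 1 < S.ncard := by
      calc 1 < q ^ (k+1) := Nat.one_lt_pow (by omega) (by omega)
        _ ≤ S.ncard := hge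
    obtain ⟨x₁, x₂, hx₁, hx₂, hne⟩ := (Set.one_lt_ncard_iff (Set.toFinite _)).mp hS2
    obtain ⟨β, hβS, hβ0⟩ : ∃ β, β ∈ S ∧ β ≠ 0 := by
      by_cases h : x₁ = 0
      · exact ⟨x₂, hx₂, by rw [h] at hne; exact fun hh => hne hh.symm⟩
      · exact ⟨x₁, hx₁, h⟩
    set b : K := β ^ (q ^ s - 1) with hb
    have hbβ : b * β = β ^ q ^ s := by
      rw [hb, ← pow_succ]
      congr 1
      have : 1 ≤ q ^ s := Nat.one_le_pow _ _ hq0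
      omega
    -- construct G
    obtain ⟨gg, hgg0, hggS⟩ : ∃ gg : ℕ → K, gg 0 = f (k+1) ∧
        ∀ j, gg (j+1) = f (k - j) + gg j * b ^ q ^ (s * (k - j)) :=
      ⟨fun j => j.rec (f (k+1)) (fun j ihj => f (k - j) + ihj * b ^ q ^ (s * (k - j))),
        rfl, fun j => rfl⟩
    set G : ℕ → K := fun i => if i ≤ k then gg (k - i) else 0 with hGdef
    have hGk : G k = f (k+1) := by simp [hGdef, hgg0]
    have hGtop : ∀ i, k < i → G i = 0 := by
      intro i hi; simp [hGdef, Nat.not_le.mpr hi]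
    have hGrec : ∀ i, i < k → G i = f (i+1) + G (i+1) * b ^ q ^ (s * (i+1)) := by
      intro i hi
      have h1 : G i = gg (k - i) := by simp [hGdef, Nat.le_of_lt hi]
      have h2 : k - i = (k - i - 1) + 1 := by omega
      rw [h1, h2, hggS]
      have h3 : k - (k - i - 1) = i + 1 := by omega
      rw [h3]
      congr 1
      simp [hGdef, (by omega : i + 1 ≤ k), (by omega : k - (i+1) = k - i - 1)]
    have hGrec' : ∀ i, i ≤ k → f (i+1) = G i - G (i+1) * b ^ q ^ (s * (i+1)) := by
      intro i hi
      rcases eq_or_lt_of_le hi with h | h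
      · rw [h, hGk, hGtop (k+1) (by omega)]; ring
      · rw [hGrec i h]; ring
    -- Frobenius expansion of D-powers
    have hDpow : ∀ (i : ℕ) (x : K),
        (x ^ q ^ s - b * x) ^ q ^ (s * i)
          = x ^ q ^ (s * (i+1)) - b ^ q ^ (s * i) * x ^ q ^ (s * i) := by
      intro i x
      rw [hfrob, mul_pow, ← pow_mul, ← pow_add]
      congr 2
      ring
    -- the key identity
    have Id1 : ∀ x : K, ∑ i ∈ Finset.range (k + 1 + 1), f i * x ^ q ^ (s * i)
        = (∑ i ∈ Finset.range (k + 1), G i * (x ^ q ^ s - b * x) ^ q ^ (s * i))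
          + (f 0 + G 0 * b) * x := by
      intro x
      have e1 : ∀ i ∈ Finset.range (k+1),
          f (i+1) * x ^ q ^ (s * (i+1))
            = G i * x ^ q ^ (s*(i+1))
              + (-(G (i+1) * b ^ q ^ (s*(i+1)) * x ^ q ^ (s*(i+1)))) := by
        intro i hi
        rw [hGrec' i (by simpa using Nat.lt_succ_iff.mp (Finset.mem_range.mp hi))]
        ring
      have e2 : ∀ i ∈ Finset.range (k+1),
          G i * (x ^ q ^ s - b * x) ^ q ^ (s * i)
            = G i * x ^ q ^ (s*(i+1)) + (-(G i * b ^ q ^ (s*i) * x ^ q ^ (s*i))) := by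
        intro i _
        rw [hDpow]; ring
      rw [Finset.sum_range_succ' (fun i => f i * x ^ q ^ (s * i)) (k+1),
        Finset.sum_congr rfl e1, Finset.sum_add_distrib,
        Finset.sum_congr rfl e2, Finset.sum_add_distrib]
      have e3 := Finset.sum_range_succ' (fun i => -(G i * b ^ q ^ (s*i) * x ^ q ^ (s*i))) (k+1)
      have e4 := Finset.sum_range_succ (fun i => -(G i * b ^ q ^ (s*i) * x ^ q ^ (s*i))) (k+1)
      have e5 : G (k+1) = 0 := hGtop _ (by omega)
      simp only [e5, zero_mul, neg_zero, add_zero] at e4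
      have e6 : ∑ i ∈ Finset.range (k+1), -(G (i+1) * b ^ q ^ (s*(i+1)) * x ^ q ^ (s*(i+1)))
          = (∑ i ∈ Finset.range (k+1), -(G i * b ^ q ^ (s*i) * x ^ q ^ (s*i)))
            + (G 0 * b ^ q ^ (s*0) * x ^ q ^ (s*0)) := by
        linear_combination e4 - e3
      rw [e6]
      simp only [Nat.mul_zero, pow_zero, pow_one]
      ring
    -- f 0 + G 0 * b = 0
    have hDβ : β ^ q ^ s - b * β = 0 := by rw [hbβ]; ring
    have hsum0 : ∑ i ∈ Finset.range (k + 1 + 1), f i * β ^ q ^ (s * i) = 0 := hβS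
    have hf0 : f 0 + G 0 * b = 0 := by
      have h1 := Id1 β
      rw [hsum0, hDβ] at h1
      have hz : ∀ i ∈ Finset.range (k+1), G i * (0:K) ^ q ^ (s * i) = 0 := by
        intro i _
        rw [zero_pow (by positivity : q ^ (s*i) ≠ 0), mul_zero]
      rw [Finset.sum_congr rfl hz, Finset.sum_const_zero, zero_add] at h1
      rcases mul_eq_zero.mp h1.symm with h | h
      · exact h
      · exact absurd h hβ0
    -- kernel correspondence
    set D : K → K := fun x => x ^ q ^ s - b * x with hD
    set S' := {x : K | ∑ i ∈ Finset.range (k + 1), G i * x ^ q ^ (s * i) = 0} with hS'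
    have hSD : ∀ x, x ∈ S → D x ∈ S' := by
      intro x hx
      have h1 := Id1 x
      have hx' : ∑ i ∈ Finset.range (k + 1 + 1), f i * x ^ q ^ (s * i) = 0 := hx
      rw [hx', hf0, zero_mul, add_zero] at h1
      exact h1.symm
    -- fiber bound
    have hfib : ∀ y, {x : K | D x = y}.ncard ≤ q := by
      intro y
      rcases Set.eq_empty_or_nonempty {x : K | D x = y} with h | ⟨x₀, hx₀⟩
      · rw [h]; simp
      · set φ : K → K := fun x => (x - x₀) * β⁻¹ with hφ
        have hφinj : Function.Injective φ := by
          intro a c h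
          have h2 := mul_right_cancel₀ (inv_ne_zero hβ0) h
          exact sub_left_injective h2
        have himg : φ '' {x : K | D x = y} ⊆ {z : K | z ^ q = z} := by
          rintro _ ⟨x, hx, rfl⟩
          have hdx : D x = y := hx
          have hdx0 : D x₀ = y := hx₀
          have hd : (x - x₀) ^ q ^ s = b * (x - x₀) := by
            rw [hfrob]
            simp only [hD] at hdx hdx0
            linear_combination hdx - hdx0
          have hz : ((x - x₀) * β⁻¹) ^ q ^ s = (x - x₀) * β⁻¹ := by
            have hb0 : b ≠ 0 := pow_ne_zero _ hβ0
            rw [mul_pow, hd, inv_pow, ← hbβ, mul_inv]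
            field_simp
          exact myFix q s m K hm hsm hK _ hz
        calc {x : K | D x = y}.ncard = (φ '' {x : K | D x = y}).ncard :=
              (Set.ncard_image_of_injective _ hφinj).symm
          _ ≤ {z : K | z ^ q = z}.ncard := Set.ncard_le_ncard himg (Set.toFinite _)
          _ ≤ q := myFixCard q K hq
    -- counting
    have h1 : S.ncard ≤ q * (D '' S).ncard := myCount K q D S hfib
    have h2 : D '' S ⊆ S' := by rintro _ ⟨x, hx, rfl⟩; exact hSD x hx
    have h3 : q ^ k ≤ (D '' S).ncard := by
      have hh : q * q ^ k ≤ q * (D '' S).ncard := by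
        calc q * q ^ k = q ^ (k+1) := (pow_succ' q k).symm
          _ ≤ S.ncard := hge
          _ ≤ q * (D '' S).ncard := h1
      exact Nat.le_of_mul_le_mul_left hh hq0
    have h4 : q ^ k ≤ S'.ncard := h3.trans (Set.ncard_le_ncard h2 (Set.toFinite _))
    have hGk0 : G k ≠ 0 := by rw [hGk]; exact hfk
    obtain ⟨hS'card, hid⟩ := ih G hGk0 h4
    have hScard : S.ncard = q ^ (k+1) := by
      have hup : S.ncard ≤ q ^ (k+1) := by
        calc S.ncard ≤ q * (D '' S).ncard := h1
          _ ≤ q * S'.ncard := Nat.mul_le_mul_left _ (Set.ncard_le_ncard h2 (Set.toFinite _))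
          _ = q * q ^ k := by rw [hS'card]
          _ = q ^ (k+1) := (pow_succ' q k).symm
      omega
    refine ⟨hScard, ?_⟩
    -- norm computation
    have hbE : b ^ E = 1 := by
      have hcl : ∀ n, b ^ (∑ i ∈ Finset.range n, (q ^ s) ^ i) * β = β ^ q ^ (s * n) := by
        intro n
        induction n with
        | zero => simp
        | succ n ihn =>
          rw [Finset.sum_range_succ, pow_add, mul_assoc, mul_comm (b ^ (q^s)^n), ← mul_assoc,
            ihn]
          have h5 : (q ^ s) ^ n = q ^ (s * n) := (pow_mul q s n).symm
          calc β ^ q ^ (s * n) * b ^ (q ^ s) ^ n = (β * b) ^ q ^ (s * n) := by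
                rw [mul_pow, h5]
            _ = (β ^ q ^ s) ^ q ^ (s * n) := by rw [mul_comm β b, hbβ]
            _ = β ^ q ^ (s * (n+1)) := by
                rw [← pow_mul, ← pow_add]
                congr 2
                ring
      have h7 := hcl m
      have h8 : β ^ q ^ (s * m) = β := by
        rw [(by ring : s * m = m * s)]
        exact myPowCardMul q m K hK β s
      rw [h8] at h7
      have h7' : b ^ E * β = 1 * β := by rw [one_mul]; exact h7
      exact mul_right_cancel₀ hβ0 h7'
    have hsgn : (-1 : K) ^ E = (-1) ^ m := by
      rw [hE, ← Finset.prod_pow_eq_pow_sum]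
      have hterm : ∀ i ∈ Finset.range m, (-1 : K) ^ (q ^ s) ^ i = -1 := by
        intro i _
        rw [← pow_mul q s i]
        exact hneg (s * i)
      rw [Finset.prod_congr rfl hterm, Finset.prod_const, Finset.card_range]
    have hf0f : f 0 = -(G 0 * b) := by linear_combination hf0
    rw [hf0f, neg_pow, mul_pow, hsgn, hid, hbE, hGk, Nat.succ_mul, pow_add]
    ring

end

/-- (Gow–Quinlan) Let `gcd(s,m)=1` and let `f = f₀ X + f₁ X^{q^s} + ⋯ + f_k X^{q^{sk}}`
be a `q^s`-linearized polynomial over `F_{q^m}` with `f_k ≠ 0`.  If `f` has exactly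
`q^k` roots in `F_{q^m}`, then `N_{q^{sm}/q^s}(f₀) = (-1)^{km} · N_{q^{sm}/q^s}(f_k)`,
where `N_{q^{sm}/q^s}(x) = x^{1 + q^s + ⋯ + q^{s(m-1)}}`. -/
theorem gow_quinlan_norm_of_full_kernel (q s m k : ℕ) (hs : 0 < s) (hm : 0 < m)
    (hsm : Nat.Coprime s m)
    (K : Type*) [Field K] [Fintype K] (hK : Fintype.card K = q ^ m)
    (f : ℕ → K) (hfk : f k ≠ 0)
    (hroots : Set.ncard {x : K | ∑ i ∈ Finset.range (k + 1), f i * x ^ q ^ (s * i) = 0}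
      = q ^ k) :
    (f 0) ^ (∑ i ∈ Finset.range m, (q ^ s) ^ i)
      = (-1) ^ (k * m) * (f k) ^ (∑ i ∈ Finset.range m, (q ^ s) ^ i) := by
  have hq : 2 ≤ q := by
    have h2 : 1 < Fintype.card K := Fintype.one_lt_card
    rw [hK] at h2
    by_contra h
    have h3 : q ^ m ≤ 1 ^ m := Nat.pow_le_pow_left (by omega) m
    simp at h3
    omega
  set p := ringChar K with hpdef
  haveI instp : CharP K p := ringChar.charP K
  obtain ⟨n, hp, hcard⟩ := FiniteField.card K p
  have hdvd : q ∣ p ^ (n : ℕ) := by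
    rw [← hcard, hK]
    exact dvd_pow_self q hm.ne'
  obtain ⟨e, -, he⟩ := (Nat.dvd_prime_pow hp).mp hdvd
  obtain ⟨-, hid⟩ := myAux q s m K hq hs hm hsm hK p e ⟨hp⟩ he k f hfk hroots.ge
  exact hid
end

section
/- Let s and n be coprime positive integers with gcd(s,n)=1 and 1 ≤ k ≤ n. The generalized Gabidulin code G_{k,s} = { a_0 x + a_1 x^{q^s} + ... + a_{k−1} x^{q^{s(k−1)}} : a_i ∈ F_{q^n} }, viewed as a set of F_q-linear maps on F_{q^n}, has q^{kn} elements and every nonzero element has rank at least n−k+1; hence G_{k,s} is a maximum rank-distance code. -/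
open Finset Polynomial

namespace GabidulinAux

variable {K : Type*} [Field K]


lemma pow_q_add {q : ℕ} (x : K) (a b : ℕ) : x ^ q ^ (a + b) = (x ^ q ^ a) ^ q ^ b := by
  rw [← pow_mul, ← pow_add]

lemma fix_mul {q a : ℕ} {x : K} (h : x ^ q ^ a = x) (j : ℕ) : x ^ q ^ (a * j) = x := by
  induction j with
  | zero => simp
  | succ j ih => rw [Nat.mul_succ, pow_q_add, ih, h]

lemma fix_add_mul {q b : ℕ} {x : K} (h : x ^ q ^ b = x) (m t : ℕ) :
    x ^ q ^ (m + b * t) = x ^ q ^ m := by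
  induction t with
  | zero => simp
  | succ t ih =>
      have e : m + b * (t + 1) = b + (m + b * t) := by ring
      rw [e, pow_q_add, h, ih]

lemma fix_gcd {q : ℕ} {x : K} {a b : ℕ} (hb : 0 < b) (ha : x ^ q ^ a = x)
    (hbx : x ^ q ^ b = x) : x ^ q ^ (Nat.gcd a b) = x := by
  rcases Nat.eq_zero_or_pos a with rfl | hapos
  · simpa using hbx
  have hgpos : 0 < Nat.gcd a b := Nat.gcd_pos_of_pos_left _ hapos
  have hga : Nat.gcd a b ∣ a := Nat.gcd_dvd_left a b
  have hgb : Nat.gcd a b ∣ b := Nat.gcd_dvd_right a b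
  set g := Nat.gcd a b with hg
  by_cases hbg : b / g = 1
  · have hgbb : g = b := by rw [← Nat.mul_div_cancel' hgb, hbg, Nat.mul_one]
    rw [hgbb]; exact hbx
  · have hco : Nat.Coprime (a / g) (b / g) := Nat.coprime_div_gcd_div_gcd hgpos
    have hbg1 : 1 < b / g := by
      have : 0 < b / g := Nat.div_pos (Nat.le_of_dvd hb hgb) hgpos
      omega
    obtain ⟨j, -, hj⟩ := Nat.exists_mul_mod_eq_one_of_coprime hco hbg1
    have h2 : g * (a / g) = a := Nat.mul_div_cancel' hga
    have h3 : g * (b / g) = b := Nat.mul_div_cancel' hgb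
    have hm1 : a / g * j = b / g * (a / g * j / (b / g)) + 1 := by
      conv_lhs => rw [← Nat.div_add_mod (a / g * j) (b / g)]
      rw [hj]
    obtain ⟨M, hM⟩ : ∃ M, a / g * j = b / g * M + 1 := ⟨_, hm1⟩
    have key : a * j = g + b * M := by
      rw [← h2, ← h3, Nat.mul_assoc, hM]; ring
    have h4 := fix_mul ha j
    rw [key, fix_add_mul hbx] at h4
    exact h4

lemma card_fix_le [Fintype K] [DecidableEq K] {d : ℕ} (hd : 2 ≤ d) :
    (Finset.univ.filter fun x : K => x ^ d = x).card ≤ d := by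
  have hP : ((X : K[X]) ^ d - X).natDegree = d :=
    FiniteField.X_pow_card_sub_X_natDegree_eq K hd
  have hP0 : ((X : K[X]) ^ d - X) ≠ 0 := by
    intro h
    rw [h, Polynomial.natDegree_zero] at hP
    omega
  have hsub : Finset.univ.filter (fun x : K => x ^ d = x) ⊆
      ((X : K[X]) ^ d - X).roots.toFinset := by
    intro x hx
    simp only [Finset.mem_filter, Finset.mem_univ, true_and] at hx
    simp only [Multiset.mem_toFinset, Polynomial.mem_roots, hP0, ne_eq,
      not_false_eq_true, true_and, Polynomial.IsRoot.def, Polynomial.eval_sub,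
      Polynomial.eval_pow, Polynomial.eval_X]
    rw [hx, sub_self]
  have h1 := Finset.card_le_card hsub
  have h2 := Multiset.toFinset_card_le ((X : K[X]) ^ d - X).roots
  have h3 := Polynomial.card_roots' ((X : K[X]) ^ d - X)
  rw [hP] at h3
  omega


lemma division {q s : ℕ}
    (hadd : ∀ (m : ℕ) (x y : K), (x + y) ^ q ^ m = x ^ q ^ m + y ^ q ^ m)
    (c : K) (k : ℕ) (a : ℕ → K) :
    ∃ (b : ℕ → K) (r : K), ∀ x : K,
      ∑ i ∈ Finset.range (k+1), a i * x ^ q ^ (s*i)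
        = (∑ j ∈ Finset.range k, b j * (x ^ q ^ s - c * x) ^ q ^ (s*j)) + r * x := by
  induction k generalizing a with
  | zero =>
      refine ⟨0, a 0, fun x => by simp⟩
  | succ k ih =>
      obtain ⟨b', r', hb'⟩ := ih (fun i => a (i+1) * c ^ q ^ (s*i))
      refine ⟨fun j => a (j+1) + (if j < k then b' j else 0), a 0 + r', fun x => ?_⟩
      have e1 : ∀ i : ℕ, a (i+1) * x ^ q ^ (s*(i+1))
          = a (i+1) * (x ^ q ^ s - c * x) ^ q ^ (s*i)
            + (a (i+1) * c ^ q ^ (s*i)) * x ^ q ^ (s*i) := by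
        intro i
        have h1 : x ^ q ^ (s*(i+1)) = (x ^ q ^ s) ^ q ^ (s*i) := by
          rw [← pow_q_add]
          ring_nf
        have h2 : (x ^ q ^ s) ^ q ^ (s*i)
            = (x ^ q ^ s - c * x) ^ q ^ (s*i) + (c * x) ^ q ^ (s*i) := by
          rw [← hadd]; ring_nf
        rw [h1, h2, mul_pow]
        ring
      rw [Finset.sum_range_succ' _ (k+1)]
      rw [Finset.sum_congr rfl (fun i _ => e1 i), Finset.sum_add_distrib, hb' x]
      have e2 : ∑ j ∈ Finset.range (k+1),
            (a (j+1) + if j < k then b' j else 0) * (x ^ q ^ s - c*x) ^ q ^ (s*j)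
          = (∑ j ∈ Finset.range (k+1), a (j+1) * (x ^ q ^ s - c*x) ^ q ^ (s*j))
            + ∑ j ∈ Finset.range k, b' j * (x ^ q ^ s - c*x) ^ q ^ (s*j) := by
        rw [Finset.sum_congr rfl (fun j _ => add_mul _ _ _), Finset.sum_add_distrib]
        congr 1
        rw [Finset.sum_range_succ, if_neg (lt_irrefl k), zero_mul, add_zero]
        exact Finset.sum_congr rfl (fun j hj => by
          rw [if_pos (Finset.mem_range.mp hj)])
      rw [e2]
      simp only [Nat.mul_zero, pow_zero, pow_one]
      ring


lemma ker_bound [Fintype K] [DecidableEq K] {q s : ℕ} (hq : 2 ≤ q)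
    (hadd : ∀ (m : ℕ) (x y : K), (x + y) ^ q ^ m = x ^ q ^ m + y ^ q ^ m)
    (hfix : ∀ x : K, x ^ q ^ s = x → x ^ q = x) :
    ∀ (k : ℕ) (a : ℕ → K),
      (¬ ∀ x : K, ∑ i ∈ Finset.range k, a i * x ^ q ^ (s*i) = 0) →
      (Finset.univ.filter fun x : K => ∑ i ∈ Finset.range k, a i * x ^ q ^ (s*i) = 0).card
        ≤ q ^ (k-1) := by
  -- subtraction is also additive
  have hsub : ∀ (m : ℕ) (x y : K), (x - y) ^ q ^ m = x ^ q ^ m - y ^ q ^ m := by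
    intro m x y
    have := hadd m (x - y) y
    rw [sub_add_cancel] at this
    rw [this]; ring
  intro k
  induction k with
  | zero => intro a h; exact absurd (fun x => by simp) h
  | succ k ih =>
    intro a hfne
    by_cases hv : ∃ v : K, v ≠ 0 ∧ ∑ i ∈ Finset.range (k+1), a i * v ^ q ^ (s*i) = 0
    · obtain ⟨v, hv0, hfv⟩ := hv
      set c : K := v ^ q ^ s * v⁻¹ with hc
      have hcv : c * v = v ^ q ^ s := by
        rw [hc, mul_assoc, inv_mul_cancel₀ hv0, mul_one]
      have hc0 : c ≠ 0 := by
        rw [hc]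
        exact mul_ne_zero (pow_ne_zero _ hv0) (inv_ne_zero hv0)
      obtain ⟨b, r, hbr⟩ := division hadd c k a
      have hTv : v ^ q ^ s - c * v = 0 := by rw [hcv, sub_self]
      have hqs0 : ∀ j : ℕ, q ^ (s*j) ≠ 0 := fun j => pow_ne_zero _ (by omega)
      have hr : r = 0 := by
        have h0 := hbr v
        rw [hfv, hTv] at h0
        rw [Finset.sum_eq_zero (fun j hj => by rw [zero_pow (hqs0 j), mul_zero]),
          zero_add] at h0
        rcases mul_eq_zero.mp h0.symm with h | h
        · exact h
        · exact absurd h hv0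
      have hfg : ∀ x : K, ∑ i ∈ Finset.range (k+1), a i * x ^ q ^ (s*i)
          = ∑ j ∈ Finset.range k, b j * (x ^ q ^ s - c * x) ^ q ^ (s*j) := by
        intro x; rw [hbr x, hr, zero_mul, add_zero]
      have hgne : ¬ ∀ y : K, ∑ j ∈ Finset.range k, b j * y ^ q ^ (s*j) = 0 := by
        intro hg; exact hfne (fun x => by rw [hfg x]; exact hg _)
      have hk1 : 1 ≤ k := by
        rcases Nat.eq_zero_or_pos k with rfl | h
        · exact absurd (fun y => by simp) hgne
        · exact h
      have hih := ih b hgne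
      set T : K → K := fun x => x ^ q ^ s - c * x with hT
      -- kernel of T has at most q elements
      have hkerT : (Finset.univ.filter fun z : K => T z = 0).card ≤ q := by
        by_cases hz : ∃ z : K, z ≠ 0 ∧ T z = 0
        · obtain ⟨z, hz0, hzT⟩ := hz
          have hzq : z ^ q ^ s = c * z := sub_eq_zero.mp hzT
          have hmap : ∀ w : K, T w = 0 → (w * z⁻¹) ^ q = w * z⁻¹ := by
            intro w hw
            have hwq : w ^ q ^ s = c * w := sub_eq_zero.mp hw
            apply hfix
            rw [mul_pow, inv_pow, hwq, hzq]
            field_simp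
          have hsubset : ∀ w ∈ (Finset.univ.filter fun z : K => T z = 0),
              w * z⁻¹ ∈ (Finset.univ.filter fun u : K => u ^ q = u) := by
            intro w hw
            simp only [Finset.mem_filter, Finset.mem_univ, true_and] at hw ⊢
            exact hmap w hw
          have hinj : Set.InjOn (fun w : K => w * z⁻¹)
              ↑(Finset.univ.filter fun z : K => T z = 0) := by
            intro w1 _ w2 _ h
            have := mul_right_cancel₀ (inv_ne_zero hz0) h
            exact this
          calc (Finset.univ.filter fun z : K => T z = 0).card
              ≤ (Finset.univ.filter fun u : K => u ^ q = u).card :=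
                Finset.card_le_card_of_injOn _ hsubset hinj
            _ ≤ q := card_fix_le hq
        · push_neg at hz
          have : (Finset.univ.filter fun z : K => T z = 0) ⊆ {0} := by
            intro z hzz
            simp only [Finset.mem_filter, Finset.mem_univ, true_and] at hzz
            simp only [Finset.mem_singleton]
            by_contra h
            exact (hz z h) hzz
          calc (Finset.univ.filter fun z : K => T z = 0).card ≤ 1 :=
              le_trans (Finset.card_le_card this) (by simp)
            _ ≤ q := by omega
      set A := Finset.univ.filter fun x : K =>
        ∑ i ∈ Finset.range (k+1), a i * x ^ q ^ (s*i) = 0 with hA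
      have h1 : A.card ≤ q * (A.image T).card := by
        apply Finset.card_le_mul_card_image
        intro y hy
        obtain ⟨x0, hx0A, hx0⟩ := Finset.mem_image.mp hy
        have hsubset : ∀ x ∈ A.filter (fun x => T x = y),
            x - x0 ∈ (Finset.univ.filter fun z : K => T z = 0) := by
          intro x hx
          simp only [Finset.mem_filter, Finset.mem_univ, true_and] at hx ⊢
          have hTadd : T (x - x0) = T x - T x0 := by
            simp only [hT]
            rw [hsub s x x0]
            ring
          rw [hTadd, hx.2, hx0, sub_self]
        have hinj2 : Set.InjOn (fun x : K => x - x0) ↑(A.filter (fun x => T x = y)) := by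
          intro w1 _ w2 _ h
          simpa using h
        calc (A.filter (fun x => T x = y)).card
            ≤ (Finset.univ.filter fun z : K => T z = 0).card :=
              Finset.card_le_card_of_injOn _ hsubset hinj2
          _ ≤ q := hkerT
      have h2 : A.image T ⊆ Finset.univ.filter
          (fun y : K => ∑ j ∈ Finset.range k, b j * y ^ q ^ (s*j) = 0) := by
        intro y hy
        obtain ⟨x, hxA, hx⟩ := Finset.mem_image.mp hy
        simp only [hA, Finset.mem_filter, Finset.mem_univ, true_and] at hxA ⊢
        rw [← hx]
        have := hfg x
        rw [hxA] at this
        exact this.symm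
      calc A.card ≤ q * (A.image T).card := h1
        _ ≤ q * q ^ (k-1) := Nat.mul_le_mul_left q (le_trans (Finset.card_le_card h2) hih)
        _ = q ^ k := by
          rw [← pow_succ']
          congr 1
          omega
        _ ≤ q ^ (k+1-1) := by rw [Nat.add_sub_cancel]
    · push_neg at hv
      have hsub1 : (Finset.univ.filter fun x : K =>
          ∑ i ∈ Finset.range (k+1), a i * x ^ q ^ (s*i) = 0) ⊆ {0} := by
        intro x hx
        simp only [Finset.mem_filter, Finset.mem_univ, true_and] at hx
        simp only [Finset.mem_singleton]
        by_contra h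
        exact (hv x h) hx
      calc (Finset.univ.filter fun x : K =>
            ∑ i ∈ Finset.range (k+1), a i * x ^ q ^ (s*i) = 0).card
          ≤ 1 := le_trans (Finset.card_le_card hsub1) (by simp)
        _ ≤ q ^ (k+1-1) := Nat.one_le_pow _ _ (by omega)


end GabidulinAux

open GabidulinAux in
/-- The generalized Gabidulin code `G_{k,s}` over `F_{q^n}` (with `gcd(s,n)=1`,
`1 ≤ k ≤ n`), viewed as a set of `F_q`-linear maps on `F_{q^n}`, has `q^{kn}`
elements, and every nonzero element has rank at least `n - k + 1` (i.e. its image,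
an `F_q`-subspace, has at least `q^{n-k+1}` elements); hence it is MRD. -/
theorem gabidulin_is_MRD (q s n k : ℕ) (hn : 0 < n) (hs : Nat.Coprime s n)
    (hk1 : 1 ≤ k) (hkn : k ≤ n)
    (K : Type*) [Field K] [Fintype K] (hK : Fintype.card K = q ^ n) :
    Set.ncard {f : K → K | ∃ a : Fin k → K,
        f = fun x => ∑ i, a i * x ^ q ^ (s * (i : ℕ))} = q ^ (k * n) ∧
    ∀ f ∈ {f : K → K | ∃ a : Fin k → K,
        f = fun x => ∑ i, a i * x ^ q ^ (s * (i : ℕ))},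
      f ≠ 0 → q ^ (n - k + 1) ≤ Set.ncard (Set.range f) := by
  classical
  have hcard2 : 1 < Fintype.card K := Fintype.one_lt_card
  have hq : 2 ≤ q := by
    by_contra h
    interval_cases q <;> simp_all <;> omega
  -- the characteristic
  set p := ringChar K with hpdef
  haveI hcp : CharP K p := ringChar.charP K
  haveI hp : Fact p.Prime := ⟨CharP.char_is_prime K p⟩
  obtain ⟨d, hpp, hd⟩ := FiniteField.card K p
  obtain ⟨e, he, hqe⟩ : ∃ e, e ≤ (d : ℕ) ∧ q = p ^ e :=
    (Nat.dvd_prime_pow hpp).mp (by rw [← hd, hK]; exact dvd_pow_self q hn.ne')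
  have hadd : ∀ (m : ℕ) (x y : K), (x + y) ^ q ^ m = x ^ q ^ m + y ^ q ^ m := by
    intro m x y
    rw [hqe, ← pow_mul]
    exact add_pow_char_pow x y p (e*m)
  have hsub : ∀ (m : ℕ) (x y : K), (x - y) ^ q ^ m = x ^ q ^ m - y ^ q ^ m := by
    intro m x y
    rw [hqe, ← pow_mul]
    exact sub_pow_char_pow x y (e*m)
  have hpowcard : ∀ x : K, x ^ q ^ n = x := by
    intro x; rw [← hK]; exact FiniteField.pow_card x
  have hfix : ∀ x : K, x ^ q ^ s = x → x ^ q = x := by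
    intro x hx
    have h := fix_gcd hn hx (hpowcard x)
    rwa [Nat.Coprime.gcd_eq_one hs, pow_one] at h
  have hinj : ∀ m : ℕ, Function.Injective (fun x : K => x ^ q ^ m) := by
    intro m x y hxy
    simp only at hxy
    have h0 : x ^ q ^ m - y ^ q ^ m = 0 := by rw [hxy, sub_self]
    rw [← hsub m x y] at h0
    have := pow_eq_zero_iff (pow_ne_zero m (by omega : q ≠ 0)) |>.mp h0
    exact sub_eq_zero.mp this
  have hsurj : ∀ m : ℕ, Function.Surjective (fun x : K => x ^ q ^ m) :=
    fun m => Finite.surjective_of_injective (hinj m)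
  -- distinctness of the power maps
  have hdist : ∀ i j : ℕ, i < j → j < n →
      (fun x : K => x ^ q ^ (s*i)) ≠ (fun x : K => x ^ q ^ (s*j)) := by
    intro i j hij hjn heq
    have heq' : ∀ x : K, x ^ q ^ (s*i) = x ^ q ^ (s*j) := fun x => congrFun heq x
    have hfixall : ∀ y : K, y ^ q ^ (s*(j-i)) = y := by
      intro y
      obtain ⟨x, hx⟩ := hsurj (s*i) y
      simp only at hx
      rw [← hx, ← pow_q_add]
      have hsum : s*i + s*(j-i) = s*j := by
        rw [← Nat.mul_add]
        congr 1
        omega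
      rw [hsum]
      exact (heq' x).symm
    have hgeq : Nat.gcd (s*(j-i)) n = Nat.gcd (j-i) n :=
      Nat.Coprime.gcd_mul_left_cancel (j-i) hs
    have hg1 : 1 ≤ Nat.gcd (s*(j-i)) n := Nat.gcd_pos_of_pos_right _ hn
    have hgn : Nat.gcd (s*(j-i)) n < n := by
      rw [hgeq]
      have h1 : Nat.gcd (j-i) n ≤ j - i := Nat.gcd_le_left _ (by omega)
      omega
    have hallg : ∀ y : K, y ^ q ^ (Nat.gcd (s*(j-i)) n) = y :=
      fun y => fix_gcd hn (hfixall y) (hpowcard y)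
    have hfull : (Finset.univ.filter fun y : K => y ^ q ^ (Nat.gcd (s*(j-i)) n) = y)
        = Finset.univ := by
      ext y; simp [hallg y]
    have hle := card_fix_le (K := K) (d := q ^ (Nat.gcd (s*(j-i)) n))
      (le_trans hq (Nat.le_self_pow (by omega) q))
    rw [hfull, Finset.card_univ, hK] at hle
    have hlt : q ^ (Nat.gcd (s*(j-i)) n) < q ^ n :=
      Nat.pow_lt_pow_right (by omega) hgn
    omega
  have hmono_inj : Function.Injective
      (fun i : Fin k => (powMonoidHom (q ^ (s * (i:ℕ))) : K →* K)) := by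
    intro i j hij
    by_contra hne
    have hne' : (i:ℕ) ≠ (j:ℕ) := fun h => hne (Fin.ext h)
    have heq : ∀ x : K, x ^ q ^ (s*(i:ℕ)) = x ^ q ^ (s*(j:ℕ)) := by
      intro x
      have h := DFunLike.congr_fun hij x
      simpa [powMonoidHom_apply] using h
    rcases Nat.lt_or_ge (i:ℕ) (j:ℕ) with h | h
    · exact hdist i j h (lt_of_lt_of_le j.isLt hkn) (funext heq)
    · have h' : (j:ℕ) < (i:ℕ) := by omega
      exact hdist j i h' (lt_of_lt_of_le i.isLt hkn) (funext fun x => (heq x).symm)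
  have hLI : LinearIndependent K
      (fun i : Fin k => ((powMonoidHom (q ^ (s * (i:ℕ))) : K →* K) : K → K)) :=
    (linearIndependent_monoidHom K K).comp _ hmono_inj
  have hAinj : Function.Injective
      (fun (a : Fin k → K) (x : K) => ∑ i, a i * x ^ q ^ (s * (i:ℕ))) := by
    intro a a' haa
    have hzero : (∑ i, (a i - a' i) •
        ((powMonoidHom (q ^ (s * (i:ℕ))) : K →* K) : K → K)) = 0 := by
      funext x
      simp only [Finset.sum_apply, Pi.smul_apply, powMonoidHom_apply, smul_eq_mul,
        Pi.zero_apply]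
      have h1 := congrFun haa x
      simp only at h1
      calc ∑ i, (a i - a' i) * x ^ q ^ (s*(i:ℕ))
          = (∑ i, a i * x ^ q ^ (s*(i:ℕ))) - ∑ i, a' i * x ^ q ^ (s*(i:ℕ)) := by
            rw [← Finset.sum_sub_distrib]
            exact Finset.sum_congr rfl fun i _ => by ring
        _ = 0 := by rw [h1, sub_self]
    have hco := Fintype.linearIndependent_iff.mp hLI (fun i => a i - a' i) hzero
    funext i
    exact sub_eq_zero.mp (hco i)
  constructor
  · have hSet : {f : K → K | ∃ a : Fin k → K, f = fun x => ∑ i, a i * x ^ q ^ (s * (i:ℕ))}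
        = Set.range (fun (a : Fin k → K) (x : K) => ∑ i, a i * x ^ q ^ (s * (i:ℕ))) := by
      ext f
      constructor
      · rintro ⟨a, rfl⟩; exact ⟨a, rfl⟩
      · rintro ⟨a, rfl⟩; exact ⟨a, rfl⟩
    rw [hSet, ← Nat.card_coe_set_eq,
      ← Nat.card_congr (Equiv.ofInjective _ hAinj), Nat.card_eq_fintype_card,
      Fintype.card_fun, hK, Fintype.card_fin, ← pow_mul, Nat.mul_comm]
  · rintro f ⟨a, rfl⟩ hf0
    set F : K →+ K := AddMonoidHom.mk' (fun x : K => ∑ i, a i * x ^ q ^ (s * (i:ℕ)))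
      (by intro x y
          rw [← Finset.sum_add_distrib]
          exact Finset.sum_congr rfl fun i _ => by rw [hadd]; ring) with hF
    set a' : ℕ → K := (fun i => if h : i < k then a ⟨i, h⟩ else 0) with ha'
    have hconv : ∀ x : K, (∑ i : Fin k, a i * x ^ q ^ (s*(i:ℕ)))
        = ∑ i ∈ Finset.range k, a' i * x ^ q ^ (s*i) := by
      intro x
      rw [← Fin.sum_univ_eq_sum_range (fun i => a' i * x ^ q ^ (s*i)) k]
      exact Finset.sum_congr rfl fun i _ => by
        simp only [ha', dif_pos i.isLt, Fin.eta]
    have hne : ¬ ∀ x : K, ∑ i ∈ Finset.range k, a' i * x ^ q ^ (s*i) = 0 := by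
      intro hall
      apply hf0
      funext x
      show (∑ i : Fin k, a i * x ^ q ^ (s*(i:ℕ))) = 0
      rw [hconv x]
      exact hall x
    have hker := ker_bound hq hadd hfix k a' hne
    have hkercard : Nat.card F.ker ≤ q ^ (k-1) := by
      have h1 : Nat.card F.ker = (Finset.univ.filter fun x : K =>
          ∑ i ∈ Finset.range k, a' i * x ^ q ^ (s*i) = 0).card := by
        rw [Nat.card_eq_fintype_card, ← Fintype.card_coe]
        apply Fintype.card_congr
        apply Equiv.subtypeEquivRight
        intro x
        simp only [AddMonoidHom.mem_ker, Finset.mem_coe, Finset.mem_filter,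
          Finset.mem_univ, true_and]
        rw [show F x = ∑ i : Fin k, a i * x ^ q ^ (s*(i:ℕ)) from rfl, hconv x]
      rw [h1]
      exact hker
    have hrange_eq : Nat.card F.range * Nat.card F.ker = q ^ n := by
      rw [← hK, ← Nat.card_eq_fintype_card,
        AddSubgroup.card_eq_card_quotient_mul_card_addSubgroup F.ker]
      congr 1
      exact (Nat.card_congr (QuotientAddGroup.quotientKerEquivRange F).toEquiv).symm
    have hkerpos : 0 < Nat.card F.ker := Nat.card_pos
    have hfinal : q ^ (n-k+1) * Nat.card F.ker ≤ Nat.card F.range * Nat.card F.ker := by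
      rw [hrange_eq]
      calc q ^ (n-k+1) * Nat.card F.ker ≤ q ^ (n-k+1) * q ^ (k-1) :=
            Nat.mul_le_mul_left _ hkercard
        _ = q ^ n := by rw [← pow_add]; congr 1; omega
    have hle : q ^ (n-k+1) ≤ Nat.card F.range := Nat.le_of_mul_le_mul_right hfinal hkerpos
    have hrangeset : Set.range (fun x : K => ∑ i, a i * x ^ q ^ (s*(i:ℕ)))
        = (F.range : Set K) := by
      rw [AddMonoidHom.coe_range]
      rfl
    rw [hrangeset, ← Nat.card_coe_set_eq]
    exact hle
end

section
/- With γ ∈ F_{q^{2n}} such that N_{q^{2n}/q}(γ) is a non-square in F_q, if a, b ∈ F_{q^n} are both nonzero then N_{q^{2sn}/q^s}(a/b) = N_{q^n/q}(a/b)^2 is a square in F_q, and in particular N_{q^{2sn}/q^s}(a/b) ≠ N_{q^{2n}/q}(γ). -/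
lemma inv_mod_cancel (n u v : ℕ) (hn : 2 ≤ n) (h : v * u % n = 1) (i : ℕ) (hi : i < n) :
    u * (v * i % n) % n = i := by
  have h1 : u * (v * i % n) ≡ u * (v * i) [MOD n] := (Nat.mod_modEq (v * i) n).mul_left u
  have h3 : v * u * i ≡ 1 * i [MOD n] :=
    Nat.ModEq.mul_right i (show v * u % n = 1 % n by rw [h, Nat.mod_eq_of_lt (by omega)])
  have : u * (v * i % n) ≡ i [MOD n] := by
    calc u * (v * i % n) ≡ u * (v * i) [MOD n] := h1
    _ = v * u * i := by ring
    _ ≡ 1 * i [MOD n] := h3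
    _ = i := one_mul i
  calc u * (v * i % n) % n = i % n := this
  _ = i := Nat.mod_eq_of_lt hi

lemma sum_pow_mul_mod (q s n : ℕ) (h : Nat.Coprime s n) :
    ∑ i ∈ Finset.range n, q ^ (s * i % n) = ∑ i ∈ Finset.range n, q ^ i := by
  rcases Nat.lt_or_ge n 2 with h2 | h2
  · interval_cases n <;> simp
  · obtain ⟨t, -, ht⟩ := Nat.exists_mul_mod_eq_one_of_coprime h h2
    have hn : 0 < n := by omega
    refine Finset.sum_nbij' (fun i => s * i % n) (fun j => t * j % n) ?_ ?_ ?_ ?_ ?_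
    · intro i _; exact Finset.mem_range.mpr (Nat.mod_lt _ hn)
    · intro j _; exact Finset.mem_range.mpr (Nat.mod_lt _ hn)
    · intro i hi
      exact inv_mod_cancel n t s h2 ht i (Finset.mem_range.mp hi)
    · intro j hj
      exact inv_mod_cancel n s t h2 (by rwa [mul_comm] at ht) j (Finset.mem_range.mp hj)
    · intro i hi; rfl


/-- Key norm computation: with `γ ∈ F_{q^{2n}}` such that `N_{q^{2n}/q}(γ)` is a
non-square in `F_q`, if `a, b ∈ F_{q^n}` are both nonzero then
`N_{q^{2sn}/q^s}(a/b) = N_{q^n/q}(a/b)²` is a square in `F_q`, and in particular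
`N_{q^{2sn}/q^s}(a/b) ≠ N_{q^{2n}/q}(γ)`. -/
theorem norm_square_computation (q s n : ℕ) (hn : 0 < n) (hs : Nat.Coprime s (2 * n))
    (K : Type*) [Field K] [Fintype K] (hK : Fintype.card K = q ^ (2 * n))
    (γ : K)
    (hγ : ¬ ∃ z : K, z ^ q = z ∧ z ^ 2 = γ ^ (∑ i ∈ Finset.range (2 * n), q ^ i))
    (a b : K) (ha : a ^ q ^ n = a) (hb : b ^ q ^ n = b)
    (ha0 : a ≠ 0) (hb0 : b ≠ 0) :
    (a / b) ^ (∑ i ∈ Finset.range (2 * n), (q ^ s) ^ i)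
        = ((a / b) ^ (∑ i ∈ Finset.range n, q ^ i)) ^ 2 ∧
    (∃ z : K, z ^ q = z ∧
        z ^ 2 = (a / b) ^ (∑ i ∈ Finset.range (2 * n), (q ^ s) ^ i)) ∧
    (a / b) ^ (∑ i ∈ Finset.range (2 * n), (q ^ s) ^ i)
        ≠ γ ^ (∑ i ∈ Finset.range (2 * n), q ^ i) := by
  -- q ≥ 2
  have hq2 : 2 ≤ q := by
    by_contra hq
    have hcard : 2 ≤ Fintype.card K := Fintype.one_lt_card
    interval_cases q <;> simp_all
  have hqn : 2 ≤ q ^ n := le_trans hq2 (Nat.le_self_pow hn.ne' q)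
  set c : K := a / b with hc
  have hc0 : c ≠ 0 := div_ne_zero ha0 hb0
  have hcq : c ^ q ^ n = c := by rw [hc, div_pow, ha, hb]
  set m : ℕ := q ^ n - 1 with hm
  have hcm : c ^ m = 1 := by
    have : c ^ (m + 1) = c := by rw [hm, Nat.sub_add_cancel (by omega)]; exact hcq
    rw [pow_succ] at this
    exact mul_right_cancel₀ hc0 (by rw [this, one_mul])
  have hsn : Nat.Coprime s n := Nat.Coprime.coprime_dvd_right ⟨2, by ring⟩ hs
  -- the key exponent congruence
  have hqm1 : ((q : ZMod m)) ^ n = 1 := by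
    have : ((q ^ n : ℕ) : ZMod m) = ((m + 1 : ℕ) : ZMod m) := by
      rw [hm, Nat.sub_add_cancel (by omega)]
    push_cast at this
    simpa using this
  have key : (∑ i ∈ Finset.range (2 * n), (q ^ s) ^ i) ≡
      2 * (∑ i ∈ Finset.range n, q ^ i) [MOD m] := by
    rw [← ZMod.natCast_eq_natCast_iff]
    push_cast
    have e1 : ∀ i : ℕ, ((q : ZMod m)) ^ (s * i) = (q : ZMod m) ^ (s * i % n) := by
      intro i
      conv_lhs => rw [← Nat.div_add_mod (s * i) n]
      rw [pow_add, pow_mul, hqm1, one_pow, one_mul]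
    calc ∑ i ∈ Finset.range (2 * n), ((q : ZMod m) ^ s) ^ i
        = ∑ i ∈ Finset.range (2 * n), (q : ZMod m) ^ (s * i % n) := by
          refine Finset.sum_congr rfl fun i _ => ?_
          rw [← pow_mul, e1]
      _ = ∑ i ∈ Finset.range n, (q : ZMod m) ^ (s * i % n)
          + ∑ i ∈ Finset.range n, (q : ZMod m) ^ (s * (n + i) % n) := by
          rw [two_mul, Finset.sum_range_add]
      _ = 2 * ∑ i ∈ Finset.range n, (q : ZMod m) ^ (s * i % n) := by
          rw [two_mul]
          congr 1
          refine Finset.sum_congr rfl fun i _ => ?_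
          congr 1
          rw [mul_add, add_comm, Nat.add_mul_mod_self_right]
      _ = 2 * ∑ i ∈ Finset.range n, (q : ZMod m) ^ i := by
          congr 1
          have := sum_pow_mul_mod q s n hsn
          have := congrArg (fun x : ℕ => (x : ZMod m)) this
          push_cast at this
          exact this
  have keq : (∑ i ∈ Finset.range (2 * n), (q ^ s) ^ i) % m
      = (2 * (∑ i ∈ Finset.range n, q ^ i)) % m := key
  have main : c ^ (∑ i ∈ Finset.range (2 * n), (q ^ s) ^ i)
      = ((c ^ (∑ i ∈ Finset.range n, q ^ i))) ^ 2 := by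
    rw [← pow_mul, mul_comm (∑ i ∈ Finset.range n, q ^ i) 2]
    calc c ^ (∑ i ∈ Finset.range (2 * n), (q ^ s) ^ i)
        = c ^ ((∑ i ∈ Finset.range (2 * n), (q ^ s) ^ i) % m) := pow_eq_pow_mod _ hcm
      _ = c ^ ((2 * (∑ i ∈ Finset.range n, q ^ i)) % m) := by rw [keq]
      _ = c ^ (2 * (∑ i ∈ Finset.range n, q ^ i)) := (pow_eq_pow_mod _ hcm).symm
  set z : K := c ^ (∑ i ∈ Finset.range n, q ^ i) with hz
  have hzq : z ^ q = z := by
    have hexp : (∑ i ∈ Finset.range n, q ^ i) * q = m + (∑ i ∈ Finset.range n, q ^ i) := by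
      have hg : (∑ i ∈ Finset.range n, q ^ i) * q + 1 = q ^ n + ∑ i ∈ Finset.range n, q ^ i := by
        have hmul : (∑ i ∈ Finset.range n, q ^ i) * q = ∑ i ∈ Finset.range n, q ^ (i + 1) := by
          rw [Finset.sum_mul]
          exact Finset.sum_congr rfl fun i _ => (pow_succ q i).symm
        have h1 := Finset.sum_range_succ' (fun i => q ^ i) n
        have h2 := Finset.sum_range_succ (fun i => q ^ i) n
        simp only [pow_zero] at h1 h2
        omega
      omega
    rw [hz, ← pow_mul, hexp, pow_add, hcm, one_mul]
  refine ⟨main, ⟨z, hzq, main.symm⟩, ?_⟩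
  intro hcontra
  exact hγ ⟨z, hzq, by rw [← hcontra, main]⟩
end

section
/- The adjoint code of D_{k,s}(γ) equals (up to equivalence) D_{k,s}(1/γ), where the adjoint of f = Σ_{i=0}^{2n−1} a_i x^{q^i} is f̂ = Σ_{i=0}^{2n−1} a_i^{q^{2n−i}} x^{q^{2n−i}}. -/
/-- Coefficient-vector representation of `D_{k,s}(γ)`. -/
def DCoeff (q s n k : ℕ) {K : Type*} [Field K] (γ : K) : Set (Fin (2 * n) → K) :=
  {v | ∃ a b : K, a ^ q ^ n = a ∧ b ^ q ^ n = b ∧ ∃ c : ℕ → K,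
    v = fun j : Fin (2 * n) => (if (j : ℕ) = 0 then a else 0)
      + (∑ i ∈ Finset.Ioo 0 k, if (j : ℕ) = (s * i) % (2 * n) then c i else 0)
      + (if (j : ℕ) = (s * k) % (2 * n) then γ * b else 0)}

/-- The adjoint of a coefficient vector: `f = Σᵢ aᵢ x^{q^i}` is sent to
`f̂ = Σᵢ aᵢ^{q^{2n-i}} x^{q^{2n-i}}`. -/
def adjCoeff (q n : ℕ) {K : Type*} [Field K] (hn : 0 < n) (v : Fin (2 * n) → K) :
    Fin (2 * n) → K :=
  fun j => (v ⟨(2 * n - (j : ℕ)) % (2 * n), Nat.mod_lt _ (by omega)⟩)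
    ^ q ^ (2 * n - (2 * n - (j : ℕ)) % (2 * n))

/-- The `F_q`-linear map on `F_{q^{2n}}` induced by a coefficient vector. -/
def toFun (q n : ℕ) {K : Type*} [Field K] (v : Fin (2 * n) → K) : K → K :=
  fun x => ∑ i : Fin (2 * n), v i * x ^ q ^ (i : ℕ)

/-- Equivalence of rank-metric codes of `q`-linearized maps on `F_{q^{2n}}`:
`C₂ = { φ₁ ∘ f^ρ ∘ φ₂ : f ∈ C₁ }` for linearized permutations `φ₁, φ₂` and a field
automorphism `ρ` (acting on `f` coefficientwise, i.e. `f^ρ = ρ ∘ f ∘ ρ⁻¹`). -/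
def codeEquiv (q n : ℕ) {K : Type*} [Field K] (C₁ C₂ : Set (K → K)) : Prop :=
  ∃ (φ₁ φ₂ : K → K) (ρ : K ≃+* K),
    (∃ a : Fin (2 * n) → K, φ₁ = fun x => ∑ i : Fin (2 * n), a i * x ^ q ^ (i : ℕ)) ∧
    Function.Bijective φ₁ ∧
    (∃ a : Fin (2 * n) → K, φ₂ = fun x => ∑ i : Fin (2 * n), a i * x ^ q ^ (i : ℕ)) ∧
    Function.Bijective φ₂ ∧
    C₂ = {g | ∃ f ∈ C₁, g = φ₁ ∘ (⇑ρ ∘ f ∘ ⇑ρ.symm) ∘ φ₂}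


section Aux
variable {K : Type*} [Field K]

lemma sum_single_gen {m : ℕ} (F : Fin m → K → K) (hF : ∀ j, F j 0 = 0)
    (e : ℕ) (he : e < m) (t : K) :
    ∑ j : Fin m, F j (if (j : ℕ) = e then t else 0) = F ⟨e, he⟩ t := by
  rw [Finset.sum_eq_single (⟨e, he⟩ : Fin m)]
  · simp
  · intro b _ hb
    rw [if_neg fun h => hb (Fin.ext h), hF]
  · simp

lemma sigma_invol {m j : ℕ} (hj : j < m) : (m - (m - j) % m) % m = j := by
  rcases Nat.eq_zero_or_pos j with rfl | hj0
  · simp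
  · have h1 : (m - j) % m = m - j := Nat.mod_eq_of_lt (by omega)
    rw [h1]
    have h2 : m - (m - j) = j := by omega
    rw [h2, Nat.mod_eq_of_lt hj]

lemma mod_ne_zero {s n : ℕ} (hs : Nat.Coprime s (2*n)) (h2n : 0 < 2*n)
    {i : ℕ} (h0 : 0 < i) (hi : i < 2*n) : (s*i) % (2*n) ≠ 0 := by
  intro h
  have hdvd : 2*n ∣ i * s := by
    have h2 := Nat.dvd_of_mod_eq_zero h
    have h3 : s * i = i * s := Nat.mul_comm _ _
    rw [h3] at h2; exact h2
  have h2 : 2*n ∣ i := Nat.Coprime.dvd_of_dvd_mul_right hs.symm hdvd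
  have := Nat.le_of_dvd h0 h2
  omega

lemma key_exp {s n k i : ℕ} (h2n : 0 < 2*n) (hik : i < k) (hi : (s*i) % (2*n) ≠ 0) :
    ((2*n - (s*i) % (2*n)) % (2*n) + (s*k) % (2*n)) % (2*n) = (s*(k - i)) % (2*n) := by
  have h1 : (s*i) % (2*n) < 2*n := Nat.mod_lt _ h2n
  rw [Nat.mod_eq_of_lt (show 2*n - (s*i) % (2*n) < 2*n by omega)]
  have e1 : s*(k-i) + s*i = s*k := by rw [← Nat.mul_add, Nat.sub_add_cancel hik.le]
  have e2 : 2*n*(s*i/(2*n)) + (s*i) % (2*n) = s*i := Nat.div_add_mod _ _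
  have e3 : 2*n - (s*i) % (2*n) + s*k = s*(k-i) + 2*n*(s*i/(2*n)) + 2*n := by
    generalize s*(k-i) = B at e1 ⊢
    generalize 2*n*(s*i/(2*n)) = D at e2 ⊢
    generalize s*i = C at e1 e2 h1 ⊢
    generalize s*k = A at e1 ⊢
    omega
  calc (2*n - (s*i) % (2*n) + (s*k) % (2*n)) % (2*n)
      = (2*n - (s*i) % (2*n) + s*k) % (2*n) :=
        Nat.ModEq.add_left _ (Nat.mod_modEq (s*k) (2*n))
    _ = (s*(k-i) + 2*n*(s*i/(2*n)) + 2*n) % (2*n) := by rw [e3]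
    _ = (s*(k-i)) % (2*n) := by
        rw [Nat.add_mod_right, Nat.add_mul_mod_self_left]

end Aux

def Vv (q s n k : ℕ) {K : Type*} [Field K] (γ a b : K) (c : ℕ → K) : Fin (2 * n) → K :=
  fun j : Fin (2 * n) => (if (j : ℕ) = 0 then a else 0)
      + (∑ i ∈ Finset.Ioo 0 k, if (j : ℕ) = (s * i) % (2 * n) then c i else 0)
      + (if (j : ℕ) = (s * k) % (2 * n) then γ * b else 0)

section Main
variable (q s n k : ℕ) {K : Type*} [Field K]

lemma DCoeff_eq (γ : K) : DCoeff q s n k γ =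
    {v | ∃ a b : K, a ^ q ^ n = a ∧ b ^ q ^ n = b ∧ ∃ c : ℕ → K,
      v = Vv q s n k γ a b c} := rfl

lemma toFun_Vv (hn : 0 < n) (γ a b : K) (c : ℕ → K) (x : K) :
    toFun q n (Vv q s n k γ a b c) x
      = a * x ^ q ^ (0:ℕ)
        + (∑ i ∈ Finset.Ioo 0 k, c i * x ^ q ^ ((s*i) % (2*n)))
        + γ * b * x ^ q ^ ((s*k) % (2*n)) := by
  have h2n : 0 < 2*n := by omega
  simp only [toFun, Vv, add_mul, Finset.sum_add_distrib, Finset.sum_mul]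
  congr 1
  · congr 1
    · exact sum_single_gen (fun j y => y * x ^ q ^ (j:ℕ)) (by simp) 0 h2n a
    · rw [Finset.sum_comm]
      refine Finset.sum_congr rfl fun i _ => ?_
      exact sum_single_gen (fun j y => y * x ^ q ^ (j:ℕ)) (by simp) _ (Nat.mod_lt _ h2n) (c i)
  · exact sum_single_gen (fun j y => y * x ^ q ^ (j:ℕ)) (by simp) _ (Nat.mod_lt _ h2n) (γ*b)

lemma adj_apply (hn : 0 < n) (v : Fin (2*n) → K) (j : Fin (2*n)) (e : ℕ) (he : e < 2*n)
    (h : (2*n - (j:ℕ)) % (2*n) = e) :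
    adjCoeff q n hn v j = v ⟨e, he⟩ ^ q ^ (2*n - e) := by
  subst h; rfl

lemma sum_pow_q (hq : 0 < q)
    (hchar : ∀ (x y : K) (m : ℕ), (x + y) ^ q ^ m = x ^ q ^ m + y ^ q ^ m)
    {ι : Type*} (S : Finset ι) (f : ι → K) (m : ℕ) :
    (∑ i ∈ S, f i) ^ q ^ m = ∑ i ∈ S, (f i) ^ q ^ m := by
  classical
  induction S using Finset.cons_induction with
  | empty => simp [zero_pow (pow_pos hq m).ne']
  | cons a S ha ih => rw [Finset.sum_cons, Finset.sum_cons, hchar, ih]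

lemma toFun_adj (hn : 0 < n) (hq : 0 < q)
    (hchar : ∀ (x y : K) (m : ℕ), (x + y) ^ q ^ m = x ^ q ^ m + y ^ q ^ m)
    (γ a b : K) (c : ℕ → K) (x : K) :
    toFun q n (adjCoeff q n hn (Vv q s n k γ a b c)) x
      = a ^ q ^ (2*n - 0) * x ^ q ^ ((2*n - 0) % (2*n))
        + (∑ i ∈ Finset.Ioo 0 k,
            (c i) ^ q ^ (2*n - (s*i) % (2*n)) * x ^ q ^ ((2*n - (s*i) % (2*n)) % (2*n)))
        + (γ*b) ^ q ^ (2*n - (s*k) % (2*n)) * x ^ q ^ ((2*n - (s*k) % (2*n)) % (2*n)) := by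
  have h2n : 0 < 2*n := by omega
  set σ : Fin (2*n) → Fin (2*n) := fun j => ⟨(2*n - (j:ℕ)) % (2*n), Nat.mod_lt _ h2n⟩ with hσ
  have hinv : Function.Involutive σ := by
    intro j
    apply Fin.ext
    simp only [hσ]
    exact sigma_invol j.isLt
  have hadj : ∀ (v : Fin (2*n) → K) (j : Fin (2*n)),
      adjCoeff q n hn v (σ j) = v j ^ q ^ (2*n - (j:ℕ)) := by
    intro v j
    have h : (2*n - ((σ j : Fin (2*n)) : ℕ)) % (2*n) = (j : ℕ) := sigma_invol j.isLt
    rw [adj_apply q n hn v (σ j) (j:ℕ) j.isLt h, Fin.eta]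
  calc toFun q n (adjCoeff q n hn (Vv q s n k γ a b c)) x
      = ∑ j : Fin (2*n), adjCoeff q n hn (Vv q s n k γ a b c) (σ j) * x ^ q ^ ((σ j : Fin (2*n)) : ℕ) := by
        simp only [toFun]
        exact (Function.Bijective.sum_comp hinv.bijective
          (fun j => adjCoeff q n hn (Vv q s n k γ a b c) j * x ^ q ^ (j:ℕ))).symm
    _ = ∑ j : Fin (2*n), (Vv q s n k γ a b c j) ^ q ^ (2*n - (j:ℕ))
          * x ^ q ^ ((2*n - (j:ℕ)) % (2*n)) := by
        refine Finset.sum_congr rfl fun j _ => ?_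
        rw [hadj]
    _ = ∑ j : Fin (2*n),
          ((if (j:ℕ) = 0 then a else 0) ^ q ^ (2*n - (j:ℕ)) * x ^ q ^ ((2*n - (j:ℕ)) % (2*n))
           + (∑ i ∈ Finset.Ioo 0 k, (if (j:ℕ) = (s*i) % (2*n) then c i else 0) ^ q ^ (2*n - (j:ℕ))
               * x ^ q ^ ((2*n - (j:ℕ)) % (2*n)))
           + (if (j:ℕ) = (s*k) % (2*n) then γ*b else 0) ^ q ^ (2*n - (j:ℕ))
               * x ^ q ^ ((2*n - (j:ℕ)) % (2*n))) := by
        refine Finset.sum_congr rfl fun j _ => ?_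
        simp only [Vv]
        rw [hchar, hchar, sum_pow_q q hq hchar, add_mul, add_mul, Finset.sum_mul]
    _ = (∑ j : Fin (2*n), (if (j:ℕ) = 0 then a else 0) ^ q ^ (2*n - (j:ℕ))
            * x ^ q ^ ((2*n - (j:ℕ)) % (2*n)))
        + (∑ i ∈ Finset.Ioo 0 k, ∑ j : Fin (2*n),
            (if (j:ℕ) = (s*i) % (2*n) then c i else 0) ^ q ^ (2*n - (j:ℕ))
            * x ^ q ^ ((2*n - (j:ℕ)) % (2*n)))
        + (∑ j : Fin (2*n), (if (j:ℕ) = (s*k) % (2*n) then γ*b else 0) ^ q ^ (2*n - (j:ℕ))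
            * x ^ q ^ ((2*n - (j:ℕ)) % (2*n))) := by
        rw [Finset.sum_add_distrib, Finset.sum_add_distrib, Finset.sum_comm]
    _ = _ := by
        congr 1
        · congr 1
          · exact sum_single_gen
              (fun j y => y ^ q ^ (2*n - (j:ℕ)) * x ^ q ^ ((2*n - (j:ℕ)) % (2*n)))
              (fun j => by simp [zero_pow (pow_pos hq _).ne']) 0 h2n a
          · refine Finset.sum_congr rfl fun i _ => ?_
            exact sum_single_gen
              (fun j y => y ^ q ^ (2*n - (j:ℕ)) * x ^ q ^ ((2*n - (j:ℕ)) % (2*n)))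
              (fun j => by simp [zero_pow (pow_pos hq _).ne']) _ (Nat.mod_lt _ h2n) (c i)
        · exact sum_single_gen
            (fun j y => y ^ q ^ (2*n - (j:ℕ)) * x ^ q ^ ((2*n - (j:ℕ)) % (2*n)))
            (fun j => by simp [zero_pow (pow_pos hq _).ne']) _ (Nat.mod_lt _ h2n) (γ*b)

lemma powpow (x : K) (u v : ℕ) : (x ^ q ^ u) ^ q ^ v = x ^ q ^ (u + v) := by
  rw [← pow_mul, ← pow_add]

lemma pow_q_shift (hcard : ∀ x : K, x ^ q ^ (2*n) = x) (x : K) :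
    ∀ t w : ℕ, x ^ q ^ (2*n*t + w) = x ^ q ^ w := by
  intro t
  induction t with
  | zero => intro w; norm_num
  | succ t ih =>
    intro w
    have h : 2*n*(t+1) + w = 2*n*t + (w + 2*n) := by ring
    rw [h, ih, pow_add, pow_mul, hcard]

lemma pow_q_reduce (hcard : ∀ x : K, x ^ q ^ (2*n) = x) (x : K) (u : ℕ) :
    x ^ q ^ u = x ^ q ^ (u % (2*n)) := by
  conv_lhs => rw [← Nat.div_add_mod u (2*n)]
  exact pow_q_shift q n hcard x _ _

lemma pow_q_dvd (hcard : ∀ x : K, x ^ q ^ (2*n) = x) (x : K) {u : ℕ}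
    (hu : 2*n ∣ u) : x ^ q ^ u = x := by
  obtain ⟨t, rfl⟩ := hu
  have := pow_q_shift q n hcard x t 0
  simpa using this

lemma main_eq (hn : 0 < n) (hq : 0 < q) (hs : Nat.Coprime s (2*n))
    (hk1 : 1 ≤ k) (hk2 : k ≤ 2*n - 1)
    (hchar : ∀ (x y : K) (m : ℕ), (x + y) ^ q ^ m = x ^ q ^ m + y ^ q ^ m)
    (hcard : ∀ x : K, x ^ q ^ (2*n) = x)
    (γ : K) (hγ : γ ≠ 0) (a b : K) (c : ℕ → K) :
    (fun x => γ⁻¹ * x ^ q ^ ((s*k) % (2*n))) ∘ toFun q n (adjCoeff q n hn (Vv q s n k γ a b c))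
      = toFun q n (Vv q s n k γ⁻¹ b (a ^ q ^ ((s*k) % (2*n)))
          (fun i => γ⁻¹ * (c (k-i)) ^ q ^ (2*n - (s*(k-i)) % (2*n) + (s*k) % (2*n)))) := by
  have h2n : 0 < 2*n := by omega
  have hklt : k < 2*n := by omega
  have hM0 : (s*k) % (2*n) ≠ 0 := mod_ne_zero hs h2n hk1 hklt
  have hMlt : (s*k) % (2*n) < 2*n := Nat.mod_lt _ h2n
  funext x
  simp only [Function.comp_apply]
  rw [toFun_adj q s n k hn hq hchar γ a b c x, toFun_Vv q s n k hn γ⁻¹ b _ _ x]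
  rw [hchar, hchar, mul_add, mul_add]
  have hA : γ⁻¹ * ((a ^ q ^ (2*n - 0) * x ^ q ^ ((2*n - 0) % (2*n))) ^ q ^ ((s*k) % (2*n)))
      = γ⁻¹ * (a ^ q ^ ((s*k) % (2*n))) * x ^ q ^ ((s*k) % (2*n)) := by
    rw [mul_pow, powpow, powpow, Nat.sub_zero, Nat.mod_self, Nat.zero_add]
    have h1 : 2*n + (s*k) % (2*n) = 2*n*1 + (s*k) % (2*n) := by ring
    rw [h1, pow_q_shift q n hcard, mul_assoc]
  have hC : γ⁻¹ * (((γ*b) ^ q ^ (2*n - (s*k) % (2*n))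
        * x ^ q ^ ((2*n - (s*k) % (2*n)) % (2*n))) ^ q ^ ((s*k) % (2*n)))
      = b * x ^ q ^ (0:ℕ) := by
    rw [mul_pow, powpow, powpow]
    have e1 : 2*n - (s*k) % (2*n) + (s*k) % (2*n) = 2*n := by omega
    have e2 : (2*n - (s*k) % (2*n)) % (2*n) + (s*k) % (2*n) = 2*n := by
      rw [Nat.mod_eq_of_lt (by omega)]; omega
    rw [e1, e2, hcard, hcard, pow_zero, pow_one, ← mul_assoc, inv_mul_cancel_left₀ hγ]
  have hB : γ⁻¹ * ((∑ i ∈ Finset.Ioo 0 k, (c i) ^ q ^ (2*n - (s*i) % (2*n))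
        * x ^ q ^ ((2*n - (s*i) % (2*n)) % (2*n))) ^ q ^ ((s*k) % (2*n)))
      = ∑ i ∈ Finset.Ioo 0 k,
          (γ⁻¹ * (c (k-i)) ^ q ^ (2*n - (s*(k-i)) % (2*n) + (s*k) % (2*n)))
            * x ^ q ^ ((s*i) % (2*n)) := by
    rw [sum_pow_q q hq hchar, Finset.mul_sum]
    refine Finset.sum_bij' (fun i _ => k - i) (fun i _ => k - i) ?_ ?_ ?_ ?_ ?_
    · intro i hi
      simp only [Finset.mem_Ioo] at hi ⊢
      omega
    · intro i hi
      simp only [Finset.mem_Ioo] at hi ⊢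
      omega
    · intro i hi
      simp only [Finset.mem_Ioo] at hi
      omega
    · intro i hi
      simp only [Finset.mem_Ioo] at hi
      omega
    · intro i hi
      simp only [Finset.mem_Ioo] at hi
      have hii : k - (k - i) = i := by omega
      rw [mul_pow, powpow, powpow, hii, ← mul_assoc]
      congr 1
      rw [pow_q_reduce q n hcard,
        key_exp h2n hi.2 (mod_ne_zero hs h2n hi.1 (by omega))]
  rw [hA, hB, hC]
  ring

end Main

/-- The adjoint code of `D_{k,s}(γ)` is equivalent to `D_{k,s}(1/γ)`. -/
theorem D_code_adjoint (q s n k : ℕ) (hn : 0 < n) (hs : Nat.Coprime s (2 * n))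
    (hk1 : 1 ≤ k) (hk2 : k ≤ 2 * n - 1)
    (K : Type*) [Field K] [Fintype K] (hK : Fintype.card K = q ^ (2 * n))
    (γ : K)
    (hγ : ¬ ∃ z : K, z ^ q = z ∧ z ^ 2 = γ ^ (∑ i ∈ Finset.range (2 * n), q ^ i)) :
    codeEquiv q n
      (toFun q n '' (adjCoeff q n hn '' DCoeff q s n k γ))
      (toFun q n '' DCoeff q s n k γ⁻¹) := by
  classical
  have h2n : 0 < 2*n := by omega
  have hq2 : 2 ≤ q := by
    by_contra h
    push_neg at h
    have hle : q ^ (2*n) ≤ 1 ^ (2*n) := Nat.pow_le_pow_left (by omega) _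
    have hcK : 1 < Fintype.card K := Fintype.one_lt_card
    rw [hK] at hcK
    rw [one_pow] at hle
    omega
  have hγ0 : γ ≠ 0 := by
    rintro rfl
    exact hγ ⟨0, zero_pow (by omega), by
      rw [zero_pow (by norm_num : (2:ℕ) ≠ 0), zero_pow]
      have : 0 < ∑ i ∈ Finset.range (2 * n), q ^ i :=
        Finset.sum_pos (fun i _ => pow_pos (by omega) i) ⟨0, Finset.mem_range.mpr h2n⟩
      omega⟩
  have hcard : ∀ x : K, x ^ q ^ (2*n) = x := fun x => by
    rw [← hK]; exact FiniteField.pow_card x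
  -- characteristic
  haveI : CharP K (ringChar K) := ringChar.charP K
  have hpp : (ringChar K).Prime := CharP.char_is_prime K (ringChar K)
  haveI : Fact (ringChar K).Prime := ⟨hpp⟩
  obtain ⟨d, -, hcardp⟩ := FiniteField.card K (ringChar K)
  have hdvd : q ∣ ringChar K ^ (d:ℕ) := by
    rw [← hcardp, hK]; exact dvd_pow_self q (by omega)
  obtain ⟨e, -, hqe⟩ := (Nat.dvd_prime_pow hpp).mp hdvd
  have hchar : ∀ (x y : K) (m : ℕ), (x + y) ^ q ^ m = x ^ q ^ m + y ^ q ^ m := by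
    intro x y m
    rw [hqe, ← pow_mul]
    exact add_pow_char_pow x y _ _
  have hMlt : (s*k) % (2*n) < 2*n := Nat.mod_lt _ h2n
  have hM0 : (s*k) % (2*n) ≠ 0 := mod_ne_zero hs h2n hk1 (by omega)
  refine ⟨fun x => γ⁻¹ * x ^ q ^ ((s*k) % (2*n)), fun x => x, RingEquiv.refl K,
    ⟨fun i => if (i:ℕ) = (s*k) % (2*n) then γ⁻¹ else 0, ?_⟩, ?_,
    ⟨fun i => if (i:ℕ) = 0 then (1:K) else 0, ?_⟩, ?_, ?_⟩
  · funext x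
    exact (sum_single_gen (fun j y => y * x ^ q ^ (j:ℕ)) (by simp) _ hMlt γ⁻¹).symm
  · apply Finite.injective_iff_bijective.mp
    intro u v h
    dsimp only at h
    have h2 := mul_left_cancel₀ (inv_ne_zero hγ0) h
    have h4 := hchar (u - v) v ((s*k) % (2*n))
    rw [sub_add_cancel] at h4
    rw [h2] at h4
    have h5 : (u - v) ^ q ^ ((s*k) % (2*n)) = 0 := right_eq_add.mp h4
    have hne : q ^ ((s*k) % (2*n)) ≠ 0 := (pow_pos (by omega : 0 < q) _).ne'
    exact sub_eq_zero.mp ((pow_eq_zero_iff hne).mp h5)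
  · funext x
    rw [sum_single_gen (fun j y => y * x ^ q ^ (j:ℕ)) (by simp) 0 h2n (1:K)]
    simp
  · exact Function.bijective_id
  · have hcomp : ∀ f : K → K,
        (fun x => γ⁻¹ * x ^ q ^ ((s*k) % (2*n)))
          ∘ (⇑(RingEquiv.refl K) ∘ f ∘ ⇑(RingEquiv.refl K).symm) ∘ (fun x : K => x)
          = (fun x => γ⁻¹ * x ^ q ^ ((s*k) % (2*n))) ∘ f := fun f => rfl
    rw [DCoeff_eq, DCoeff_eq]
    ext g
    simp only [Set.mem_image, Set.mem_setOf_eq, hcomp]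
    constructor
    · rintro ⟨v, ⟨a', b', ha', hb', c', rfl⟩, rfl⟩
      have ha : (b' ^ q ^ (2*n - (s*k) % (2*n))) ^ q ^ n = b' ^ q ^ (2*n - (s*k) % (2*n)) := by
        rw [powpow, add_comm, ← powpow, hb']
      refine ⟨toFun q n (adjCoeff q n hn (Vv q s n k γ (b' ^ q ^ (2*n - (s*k) % (2*n))) a'
          (fun j => (γ * c' (k - j)) ^ q ^ (2*n - (2*n - (s*j) % (2*n) + (s*k) % (2*n)) % (2*n))))),
        ⟨_, ⟨_, ⟨_, _, ha, ha', _, rfl⟩, rfl⟩, rfl⟩, ?_⟩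
      rw [main_eq q s n k hn (by omega) hs hk1 hk2 hchar hcard γ hγ0]
      have hb'' : (b' ^ q ^ (2*n - (s*k) % (2*n))) ^ q ^ ((s*k) % (2*n)) = b' := by
        rw [powpow]
        have h7 : 2*n - (s*k) % (2*n) + (s*k) % (2*n) = 2*n := by omega
        rw [h7]
        exact hcard b'
      rw [hb'']
      refine congrArg (toFun q n) ?_
      funext j
      simp only [Vv]
      congr 2
      refine Finset.sum_congr rfl fun i hi => ?_
      simp only [Finset.mem_Ioo] at hi
      have hE : (2*n - (s*(k-i)) % (2*n) + (s*k) % (2*n)) % (2*n) < 2*n := Nat.mod_lt _ h2n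
      have hdvd2 : 2*n ∣ (2*n - (2*n - (s*(k-i)) % (2*n) + (s*k) % (2*n)) % (2*n)
          + (2*n - (s*(k-i)) % (2*n) + (s*k) % (2*n))) := by
        apply Nat.dvd_of_mod_eq_zero
        have h1 : (2*n - (2*n - (s*(k-i)) % (2*n) + (s*k) % (2*n)) % (2*n)
              + (2*n - (s*(k-i)) % (2*n) + (s*k) % (2*n))) % (2*n)
            = (2*n - (2*n - (s*(k-i)) % (2*n) + (s*k) % (2*n)) % (2*n)
              + (2*n - (s*(k-i)) % (2*n) + (s*k) % (2*n)) % (2*n)) % (2*n) :=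
          ((Nat.mod_modEq (2*n - (s*(k-i)) % (2*n) + (s*k) % (2*n)) (2*n)).add_left _).symm
        rw [h1, Nat.sub_add_cancel hE.le, Nat.mod_self]
      have hkki : k - (k - i) = i := by omega
      congr 1
      rw [hkki, powpow, pow_q_dvd q n hcard _ hdvd2, inv_mul_cancel_left₀ hγ0]
    · rintro ⟨f, ⟨w, ⟨v, ⟨a, b, ha, hb, c, rfl⟩, rfl⟩, rfl⟩, rfl⟩
      refine ⟨Vv q s n k γ⁻¹ b (a ^ q ^ ((s*k) % (2*n)))
          (fun i => γ⁻¹ * (c (k-i)) ^ q ^ (2*n - (s*(k-i)) % (2*n) + (s*k) % (2*n))),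
        ⟨b, a ^ q ^ ((s*k) % (2*n)), hb, ?_, _, rfl⟩, ?_⟩
      · rw [powpow, add_comm, ← powpow, ha]
      · exact (main_eq q s n k hn (by omega) hs hk1 hk2 hchar hcard γ hγ0 a b c).symm
end

section
/- Let γ ∈ F_{q^{2n}} with N_{q^{2n}/q}(γ) a non-square in F_q, and write γ^{q^s+1} = u + vγ with u, v ∈ F_{q^n} (such u,v exist since {1,γ} is an F_{q^n}-basis of F_{q^{2n}}). Then the binary operation on F_{q^n}^2 defined by (c,d)*(a,b) = (ac + b d^{q^s} u, ad + b c^{q^s} + b d^{q^s} v) makes (F_{q^n}^2, +, *) a (pre)semifield: * is biadditive and has no zero divisors. -/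
/-- The Hughes–Kleinfeld multiplication on pairs:
`(c,d) * (a,b) = (ac + b d^{q^s} u, ad + b c^{q^s} + b d^{q^s} v)`. -/
def HKmul (q s : ℕ) {K : Type*} [Field K] (u v : K) (x y : K × K) : K × K :=
  (y.1 * x.1 + y.2 * x.2 ^ q ^ s * u,
   y.1 * x.2 + y.2 * x.1 ^ q ^ s + y.2 * x.2 ^ q ^ s * v)

private lemma hk_geom_split (q n : ℕ) :
    ∑ i ∈ Finset.range (2 * n), q ^ i
      = (∑ i ∈ Finset.range n, q ^ i) + q ^ n * ∑ i ∈ Finset.range n, q ^ i := by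
  rw [← Finset.sum_range_add_sum_Ico (fun i => q ^ i) (by omega : n ≤ 2 * n),
      Finset.sum_Ico_eq_sum_range]
  simp only [show 2 * n - n = n from by omega, pow_add]
  rw [Finset.mul_sum]

private lemma hk_one_add (q s : ℕ) (hq : 1 ≤ q) :
    1 + (q - 1) * ∑ i ∈ Finset.range s, q ^ i = q ^ s := by
  induction s with
  | zero => simp
  | succ m ih =>
    rw [Finset.sum_range_succ, Nat.mul_add, ← Nat.add_assoc, ih]
    have h1 : q ^ m + (q - 1) * q ^ m = (1 + (q - 1)) * q ^ m := by ring
    rw [h1, Nat.add_sub_cancel' hq, pow_succ, mul_comm]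

/-- If `w` lies in the subfield fixed by `x ↦ x^{q^n}`, then its "norm"
`w ^ (∑_{i<2n} q^i)` is the square of an element fixed by `x ↦ x^q`. -/
private lemma hk_norm_sq (q n : ℕ) (hq : 0 < q) (hn : 0 < n) {K : Type*} [Field K]
    (w : K) (hw : w ^ q ^ n = w) :
    ∃ z : K, z ^ q = z ∧ z ^ 2 = w ^ (∑ i ∈ Finset.range (2 * n), q ^ i) := by
  set S : ℕ := ∑ i ∈ Finset.range n, q ^ i with hS
  have hSpos : 0 < S := by
    refine Finset.sum_pos (fun i _ => pow_pos hq i) ?_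
    exact Finset.nonempty_range_iff.mpr hn.ne'
  refine ⟨w ^ S, ?_, ?_⟩
  · rcases eq_or_ne w 0 with rfl | hw0
    · rw [zero_pow hSpos.ne', zero_pow hq.ne']
    · have e1 : w ^ (∑ i ∈ Finset.range (n + 1), q ^ i) = (w ^ S) ^ q * w := by
        rw [geom_sum_succ, ← hS, pow_add, pow_one, mul_comm q S, pow_mul]
      have e2 : w ^ (∑ i ∈ Finset.range (n + 1), q ^ i) = w ^ S * w := by
        rw [geom_sum_succ', ← hS, pow_add, hw, mul_comm]
      exact mul_right_cancel₀ hw0 (e1.symm.trans e2)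
  · rw [hk_geom_split, pow_add, pow_mul, hw, sq]

/-- With `γ ∈ F_{q^{2n}}` of non-square norm, writing `γ^{q^s+1} = u + vγ` with
`u, v ∈ F_{q^n}`, the Hughes–Kleinfeld multiplication on `F_{q^n}²` is biadditive and
has no zero divisors, i.e. it makes `(F_{q^n}², +, *)` a presemifield. -/
theorem HK_presemifield (q s n : ℕ) (hn : 0 < n) (hs : Nat.Coprime s (2 * n))
    (K : Type*) [Field K] [Fintype K] (hK : Fintype.card K = q ^ (2 * n))
    (γ u v : K) (hu : u ^ q ^ n = u) (hv : v ^ q ^ n = v)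
    (hγ : ¬ ∃ z : K, z ^ q = z ∧ z ^ 2 = γ ^ (∑ i ∈ Finset.range (2 * n), q ^ i))
    (hγuv : γ ^ (q ^ s + 1) = u + v * γ) :
    (∀ x x' y : K × K, HKmul q s u v (x + x') y
        = HKmul q s u v x y + HKmul q s u v x' y) ∧
    (∀ x y y' : K × K, HKmul q s u v x (y + y')
        = HKmul q s u v x y + HKmul q s u v x y') ∧
    (∀ a b c d : K, a ^ q ^ n = a → b ^ q ^ n = b → c ^ q ^ n = c → d ^ q ^ n = d →
      HKmul q s u v (c, d) (a, b) = 0 → (c, d) = (0, 0) ∨ (a, b) = (0, 0)) := by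
  -- characteristic setup
  obtain ⟨p, hp⟩ := CharP.exists K
  obtain ⟨m, hpprime, hcardp⟩ := FiniteField.card K p
  haveI := Fact.mk hpprime
  have hqdvd : q ∣ p ^ (m : ℕ) := by
    rw [← hcardp, hK]; exact dvd_pow_self q (by omega)
  obtain ⟨k, _, hqpk⟩ := (Nat.dvd_prime_pow hpprime).mp hqdvd
  have hq0 : 0 < q := hqpk ▸ pow_pos hpprime.pos k
  have frob : ∀ (t : ℕ) (x y : K), (x + y) ^ q ^ t = x ^ q ^ t + y ^ q ^ t := by
    intro t x y
    have hqe : q ^ t = p ^ (k * t) := by rw [hqpk, ← pow_mul]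
    rw [hqe]
    exact add_pow_char_pow x y p (k * t)
  have hneg : ∀ x : K, x ^ q ^ n = x → (-x) ^ q ^ n = -x := by
    intro x hxfix
    have h0 : (x + -x) ^ q ^ n = x ^ q ^ n + (-x) ^ q ^ n := frob n x (-x)
    rw [add_neg_cancel, zero_pow (pow_pos hq0 n).ne', hxfix] at h0
    linear_combination -h0
  refine ⟨?_, ?_, ?_⟩
  · intro x x' y
    refine Prod.ext ?_ ?_ <;> simp [HKmul, frob s] <;> ring
  · intro x y y'
    refine Prod.ext ?_ ?_ <;> simp [HKmul] <;> ring
  · intro a b c d ha hb hc hd hmul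
    rw [HKmul, show ((0 : K × K)) = ((0 : K), (0 : K)) from rfl, Prod.mk.injEq] at hmul
    obtain ⟨h1, h2⟩ := hmul
    set x : K := c + d * γ with hxdef
    have hγuv' : γ ^ q ^ s * γ = u + v * γ := by
      rw [← pow_succ, hγuv]
    have key : a * x + b * x ^ q ^ s * γ = 0 := by
      have hxpow : x ^ q ^ s = c ^ q ^ s + d ^ q ^ s * γ ^ q ^ s := by
        rw [hxdef, frob s, mul_pow]
      rw [hxpow]
      linear_combination h1 + γ * h2 + b * d ^ q ^ s * hγuv'
    by_cases hx : x = 0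
    · by_cases hd0 : d = 0
      · left
        have hc0 : c = 0 := by
          have := hx
          rw [hxdef, hd0] at this; simpa using this
        simp [hc0, hd0]
      · exfalso
        apply hγ
        have hγeq : γ = (-c) * d⁻¹ := by
          field_simp
          linear_combination hx
        have hγF : γ ^ q ^ n = γ := by
          rw [hγeq, mul_pow, hneg c hc, inv_pow, hd]
        exact hk_norm_sq q n hq0 hn γ hγF
    · by_cases hb0 : b = 0
      · right
        have ha0 : a = 0 := by
          have hax : a * x = 0 := by
            have := key; rw [hb0] at this; simpa using this
          rcases mul_eq_zero.mp hax with h | h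
          · exact h
          · exact absurd h hx
        simp [ha0, hb0]
      · exfalso
        apply hγ
        set w : K := (-a) * b⁻¹ with hwdef
        have hbinv : b * b⁻¹ = 1 := mul_inv_cancel₀ hb0
        have hwF : w ^ q ^ n = w := by
          rw [hwdef, mul_pow, hneg a ha, inv_pow, hb]
        have hkey2 : γ * x ^ q ^ s = w * x := by
          have hb2 : b * (γ * x ^ q ^ s) = b * (w * x) := by
            rw [hwdef]
            linear_combination key + (a * x) * hbinv
          exact mul_left_cancel₀ hb0 hb2
        set e : ℕ := ∑ i ∈ Finset.range (2 * n), q ^ i with he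
        set T : ℕ := ∑ i ∈ Finset.range s, q ^ i with hT
        have hA : 1 + (q - 1) * e = q ^ (2 * n) := hk_one_add q (2 * n) hq0
        have hTs : 1 + (q - 1) * T = q ^ s := hk_one_add q s hq0
        have hsub : (q - 1) * e = q ^ (2 * n) - 1 := by omega
        have hexp : q ^ s * e = e + (q ^ (2 * n) - 1) * T := by
          calc q ^ s * e = (1 + (q - 1) * T) * e := by rw [hTs]
            _ = e + ((q - 1) * e) * T := by ring
            _ = e + (q ^ (2 * n) - 1) * T := by rw [hsub]
        have hx1 : x ^ (q ^ (2 * n) - 1) = 1 := by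
          rw [← hK]; exact FiniteField.pow_card_sub_one_eq_one x hx
        have hxe : x ^ (q ^ s * e) = x ^ e := by
          rw [hexp, pow_add, pow_mul, hx1, one_pow, mul_one]
        have hpow : γ ^ e * x ^ (q ^ s * e) = w ^ e * x ^ e := by
          have h := congrArg (· ^ e) hkey2
          simpa only [mul_pow, ← pow_mul] using h
        have hγe : γ ^ e = w ^ e := by
          rw [hxe] at hpow
          exact mul_right_cancel₀ (pow_ne_zero e hx) hpow
        obtain ⟨z, hz1, hz2⟩ := hk_norm_sq q n hq0 hn w hwF
        exact ⟨z, hz1, by rw [hz2, ← hγe]⟩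
end

section
/- For (x,y) ∈ F_{q^n}^2, the element x + yγ lies in the left nucleus of the Hughes–Kleinfeld semifield H if and only if x^{q^{2s}} + y^{q^{2s}} v^{q^s} = x + y^{q^s} v and y u + x^{q^s} v + y^{q^s} v^2 = y^{q^{2s}} u^{q^s} + x^{q^{2s}} v + y^{q^{2s}} v^{q^s+1}. -/
private lemma HK_geom_aux (q : ℕ) (n : ℕ) :
    q * (∑ i ∈ Finset.range n, q ^ i) + 1 = (∑ i ∈ Finset.range n, q ^ i) + q ^ n := by
  induction n with
  | zero => simp
  | succ k ih =>
    rw [Finset.sum_range_succ]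
    calc q * ((∑ i ∈ Finset.range k, q ^ i) + q ^ k) + 1
        = (q * (∑ i ∈ Finset.range k, q ^ i) + 1) + q * q ^ k := by ring
      _ = ((∑ i ∈ Finset.range k, q ^ i) + q ^ k) + q * q ^ k := by rw [ih]
      _ = (∑ i ∈ Finset.range k, q ^ i) + q ^ k + q ^ (k + 1) := by ring

private lemma HK_split_aux (q a b : ℕ) :
    ∑ i ∈ Finset.range (a + b), q ^ i
      = (∑ i ∈ Finset.range a, q ^ i) + q ^ a * ∑ i ∈ Finset.range b, q ^ i := by
  induction b with
  | zero => simp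
  | succ k ih =>
    rw [← Nat.add_assoc, Finset.sum_range_succ, Finset.sum_range_succ, ih, pow_add]
    ring

/-- The element `x + yγ` (identified with `(x,y)`) lies in the left nucleus of the
Hughes–Kleinfeld semifield `H` if and only if
`x^{q^{2s}} + y^{q^{2s}} v^{q^s} = x + y^{q^s} v` and
`yu + x^{q^s}v + y^{q^s}v² = y^{q^{2s}}u^{q^s} + x^{q^{2s}}v + y^{q^{2s}}v^{q^s+1}`. -/
theorem HK_left_nucleus (q s n : ℕ) (hn : 0 < n) (hs : Nat.Coprime s (2 * n))
    (K : Type*) [Field K] [Fintype K] (hK : Fintype.card K = q ^ (2 * n))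
    (γ u v : K) (hu : u ^ q ^ n = u) (hv : v ^ q ^ n = v)
    (hγ : ¬ ∃ z : K, z ^ q = z ∧ z ^ 2 = γ ^ (∑ i ∈ Finset.range (2 * n), q ^ i))
    (hγuv : γ ^ (q ^ s + 1) = u + v * γ)
    (x y : K) (hx : x ^ q ^ n = x) (hy : y ^ q ^ n = y) :
    (∀ w z : K × K, w.1 ^ q ^ n = w.1 → w.2 ^ q ^ n = w.2 →
        z.1 ^ q ^ n = z.1 → z.2 ^ q ^ n = z.2 →
        HKmul q s u v (x, y) (HKmul q s u v w z)
          = HKmul q s u v (HKmul q s u v (x, y) w) z)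
      ↔ (x ^ q ^ (2 * s) + y ^ q ^ (2 * s) * v ^ q ^ s = x + y ^ q ^ s * v ∧
         y * u + x ^ q ^ s * v + y ^ q ^ s * v ^ 2
           = y ^ q ^ (2 * s) * u ^ q ^ s + x ^ q ^ (2 * s) * v
             + y ^ q ^ (2 * s) * v ^ (q ^ s + 1)) := by
  -- q ≥ 2
  have hq2 : 2 ≤ q := by
    by_contra h
    push_neg at h
    have h1 : Fintype.card K ≤ 1 := by
      rw [hK]
      calc q ^ (2 * n) ≤ 1 ^ (2 * n) := Nat.pow_le_pow_left (by omega) _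
        _ = 1 := one_pow _
    have h2 := Fintype.one_lt_card (α := K)
    omega
  -- characteristic setup
  set p := ringChar K with hpdef
  haveI : CharP K p := ringChar.charP K
  have hp : p.Prime := CharP.char_is_prime K p
  haveI : Fact p.Prime := ⟨hp⟩
  obtain ⟨m, hpm, hcard⟩ := FiniteField.card K p
  have hq_dvd : q ∣ p ^ (m : ℕ) := by
    rw [← hcard, hK]
    exact dvd_pow_self q (by omega)
  obtain ⟨j, hjm, hqj⟩ := (Nat.dvd_prime_pow hp).mp hq_dvd
  have hqs : q ^ s = p ^ (j * s) := by rw [hqj, ← pow_mul]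
  have hadd : ∀ a b : K, (a + b) ^ q ^ s = a ^ q ^ s + b ^ q ^ s := by
    intro a b; rw [hqs, add_pow_char_pow]
  have hsub : ∀ a b : K, (a - b) ^ q ^ s = a ^ q ^ s - b ^ q ^ s := by
    intro a b; rw [hqs, sub_pow_char_pow]
  have hσσ : ∀ a : K, (a ^ q ^ s) ^ q ^ s = a ^ q ^ (2 * s) := by
    intro a; rw [← pow_mul, ← pow_add, two_mul]
  have hqs0 : q ^ s ≠ 0 := pow_ne_zero s (by omega)
  have hqn0 : q ^ n ≠ 0 := pow_ne_zero n (by omega)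
  -- u ≠ 0
  have hu0 : u ≠ 0 := by
    intro h0
    apply hγ
    by_cases hg : γ = 0
    · refine ⟨0, by rw [zero_pow (by omega)], ?_⟩
      have hN : (∑ i ∈ Finset.range (2 * n), q ^ i) ≠ 0 := by
        have : 0 < ∑ i ∈ Finset.range (2 * n), q ^ i :=
          Finset.sum_pos (fun i _ => pow_pos (by omega) i) ⟨0, Finset.mem_range.mpr (by omega)⟩
        omega
      rw [hg, zero_pow hN, zero_pow (by norm_num : (2 : ℕ) ≠ 0)]
    · have hγs : γ ^ q ^ s = v := by
        have h1 : γ ^ q ^ s * γ = v * γ := by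
          rw [← pow_succ, hγuv, h0, zero_add]
        exact mul_right_cancel₀ hg h1
      have hγn : γ ^ q ^ n = γ := by
        have h3 : (γ ^ q ^ n) ^ q ^ s = γ ^ q ^ s := by
          calc (γ ^ q ^ n) ^ q ^ s = (γ ^ q ^ s) ^ q ^ n := by
                rw [← pow_mul, ← pow_mul, mul_comm]
            _ = γ ^ q ^ s := by rw [hγs]; exact hv
        have h2 : (γ ^ q ^ n - γ) ^ q ^ s = 0 := by rw [hsub, h3, sub_self]
        exact sub_eq_zero.mp (pow_eq_zero_iff hqs0 |>.mp h2)
      set S := ∑ i ∈ Finset.range n, q ^ i with hS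
      refine ⟨γ ^ S, ?_, ?_⟩
      · have h3 : (γ ^ S) ^ q * γ = γ ^ S * γ := by
          rw [← pow_mul, ← pow_succ, mul_comm S q, HK_geom_aux, pow_add, hγn, ← pow_succ]
        exact mul_right_cancel₀ hg h3
      · rw [two_mul, HK_split_aux, pow_add, pow_mul, hγn, sq]
  constructor
  · -- forward
    intro hA
    have h := hA (0, 1) (0, 1) (by rw [zero_pow hqn0]) (one_pow _) (by rw [zero_pow hqn0]) (one_pow _)
    simp only [HKmul, zero_mul, one_mul, mul_one, zero_add, add_zero, one_pow,
      zero_pow hqs0, mul_zero, Prod.mk.injEq] at h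
    obtain ⟨e1, e2⟩ := h
    simp only [hadd, mul_pow, hσσ] at e1 e2
    constructor
    · apply mul_left_cancel₀ hu0
      linear_combination -e1
    · rw [pow_add, pow_one]
      linear_combination e2
  · -- backward
    rintro ⟨h1, h2⟩ w z _ _ _ _
    rw [pow_add, pow_one] at h2
    simp only [HKmul, Prod.mk.injEq, hadd, mul_pow, hσσ]
    constructor
    · linear_combination (-(z.2 * w.2 ^ q ^ s * u)) * h1
    · linear_combination (z.2 * w.2 ^ q ^ s) * h2
end

section
/- Let 2 ≤ k ≤ 2n−2 and gcd(s,2n)=1, with γ ∈ F_{q^{2n}} such that N_{q^{2n}/q}(γ) is a non-square in F_q. Then the right nucleus of the code D_{k,s}(γ), namely N_r(D) = { φ a linearized polynomial : φ ∘ f ∈ D for all f ∈ D }, equals { aX : a ∈ F_{q^n} }. -/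
/-- `φ : K → K` is (induced by) a `q`-linearized polynomial modulo `X^{q^n} - X`. -/
def IsLinPoly (q n : ℕ) {K : Type*} [Field K] (φ : K → K) : Prop :=
  ∃ a : Fin n → K, φ = fun x => ∑ i : Fin n, a i * x ^ q ^ (i : ℕ)

/-- The code `D_{k,s}(γ)` as a set of `F_q`-linear maps on `F_{q^{2n}}`. -/
def DFun (q s n k : ℕ) {K : Type*} [Field K] (γ : K) : Set (K → K) :=
  {f | ∃ a b : K, a ^ q ^ n = a ∧ b ^ q ^ n = b ∧ ∃ c : ℕ → K,
    f = fun x => a * x + (∑ i ∈ Finset.Ioo 0 k, c i * x ^ q ^ (s * i))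
      + γ * b * x ^ q ^ (s * k)}

section Aux

set_option linter.unusedSectionVars false

variable {K : Type*} [Field K] [Fintype K]

lemma aux_cycle (q N : ℕ) (hK : Fintype.card K = q ^ N) (x : K) (m : ℕ) :
    x ^ q ^ (m + N) = x ^ q ^ m := by
  rw [pow_add, mul_comm, pow_mul, ← hK, FiniteField.pow_card]

lemma aux_mul (q N : ℕ) (hK : Fintype.card K = q ^ N) (x : K) (d r : ℕ) :
    x ^ q ^ (N * d + r) = x ^ q ^ r := by
  induction d with
  | zero => simp
  | succ d ih =>
    have : N * (d + 1) + r = (N * d + r) + N := by ring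
    rw [this, aux_cycle q N hK, ih]

lemma aux_mod (q N : ℕ) (hK : Fintype.card K = q ^ N) (x : K) (m : ℕ) :
    x ^ q ^ m = x ^ q ^ (m % N) := by
  conv_lhs => rw [← Nat.div_add_mod m N, mul_comm]
  rw [← aux_mul q N hK x (m / N) (m % N), mul_comm]

lemma aux_congr (q N : ℕ) (hK : Fintype.card K = q ^ N) (x : K) {a b : ℕ}
    (hab : a % N = b % N) : x ^ q ^ a = x ^ q ^ b := by
  rw [aux_mod q N hK x a, aux_mod q N hK x b, hab]

lemma pow_frob_inj (q N : ℕ) (hK : Fintype.card K = q ^ N) (m : ℕ) :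
    Function.Injective (fun x : K => x ^ q ^ m) := by
  have key : ∀ z : K, (z ^ q ^ m) ^ q ^ (N * (m + 1) - m) = z := by
    intro z
    rw [← pow_mul, ← pow_add]
    have h1 : m + (N * (m + 1) - m) = N * (m + 1) := by
      have : m ≤ N * (m + 1) := by nlinarith [Nat.one_le_iff_ne_zero.mpr (show N ≠ 0 by
        intro h; rw [h] at hK; simp at hK
        have : 1 < Fintype.card K := Fintype.one_lt_card
        omega)]
      omega
    rw [h1, show N * (m+1) = N * (m+1) + 0 by ring, aux_mul q N hK]
    simp
  intro x y h
  have := congrArg (fun z : K => z ^ q ^ (N * (m + 1) - m)) h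
  simpa [key] using this

lemma coeff_unique (q s N : ℕ) (hK : Fintype.card K = q ^ N) (hN : 2 ≤ N)
    (hs : Nat.Coprime s N) {A B : Fin N → K}
    (h : (fun x : K => ∑ j : Fin N, A j * x ^ q ^ (s * (j : ℕ)))
        = fun x : K => ∑ j : Fin N, B j * x ^ q ^ (s * (j : ℕ))) : A = B := by
  classical
  have hq2 : 2 ≤ q := by
    have h1 : 1 < Fintype.card K := Fintype.one_lt_card
    rw [hK] at h1
    by_contra hq
    have : q ^ N ≤ 1 ^ N := Nat.pow_le_pow_left (by omega) _
    simp at this; omega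
  set e : Fin N → ℕ := fun j => (s * (j : ℕ)) % N with he
  have heN : ∀ j, e j < N := fun j => Nat.mod_lt _ (by omega)
  have he_inj : Function.Injective e := by
    intro j j' hjj
    have hm : (j : ℕ) % N = (j' : ℕ) % N :=
      Nat.ModEq.cancel_left_of_coprime hs.symm hjj
    rw [Nat.mod_eq_of_lt j.isLt, Nat.mod_eq_of_lt j'.isLt] at hm
    exact Fin.ext hm
  set F : Fin N → (K →* K) := fun j => powMonoidHom (q ^ e j) with hF
  have hFinj : Function.Injective F := by
    intro j j' hh
    obtain ⟨g, hg⟩ := IsCyclic.exists_generator (α := Kˣ)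
    have horder : orderOf g = q ^ N - 1 := by
      rw [orderOf_eq_card_of_forall_mem_zpowers hg, Nat.card_eq_fintype_card,
        Fintype.card_units, hK]
    have hfun : (g : K) ^ q ^ e j = (g : K) ^ q ^ e j' := by
      have := congrArg (fun F : K →* K => F (g : K)) hh
      simpa [hF, powMonoidHom] using this
    have hgu : g ^ q ^ e j = g ^ q ^ e j' := by
      apply Units.ext
      push_cast
      exact hfun
    rw [pow_eq_pow_iff_modEq, horder] at hgu
    have hlt : ∀ jj : Fin N, q ^ e jj < q ^ N - 1 := by
      intro jj
      have h1 : q ^ e jj ≤ q ^ (N - 1) := Nat.pow_le_pow_right (by omega) (by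
        have := heN jj; omega)
      have h2 : q ^ (N - 1) < q ^ N - 1 := by
        have hqq : q ^ N = q * q ^ (N - 1) := by
          rw [← pow_succ']; congr 1; omega
        have hge : 2 ≤ q ^ (N - 1) := by
          calc 2 = 2 ^ 1 := rfl
          _ ≤ q ^ (N - 1) := Nat.pow_le_pow_left (by omega) 1 |>.trans
              (Nat.pow_le_pow_right (by omega) (by omega))
        have hmul : 2 * q ^ (N - 1) ≤ q * q ^ (N - 1) := Nat.mul_le_mul_right _ hq2
        omega
      omega
    have heq : q ^ e j = q ^ e j' := by
      have h1 := hlt j; have h2 := hlt j'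
      have hm : q ^ e j % (q ^ N - 1) = q ^ e j' % (q ^ N - 1) := hgu
      rwa [Nat.mod_eq_of_lt h1, Nat.mod_eq_of_lt h2] at hm
    exact he_inj (Nat.pow_right_injective hq2 heq)
  have hli := (linearIndependent_monoidHom K K).comp F hFinj
  rw [Fintype.linearIndependent_iff] at hli
  funext j
  have hzero : ∑ i : Fin N, (A i - B i) • ((F i : K →* K) : K → K) = 0 := by
    funext x
    have hx := congrFun h x
    simp only [Finset.sum_apply, Pi.smul_apply, Pi.zero_apply, smul_eq_mul, hF,
      powMonoidHom_apply]
    have hred : ∀ C : Fin N → K, ∑ i : Fin N, C i * x ^ q ^ (s * (i : ℕ))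
        = ∑ i : Fin N, C i * x ^ q ^ e i := by
      intro C
      refine Finset.sum_congr rfl fun i _ => by rw [aux_mod q N hK x (s * (i:ℕ))]
    rw [hred A, hred B] at hx
    have : ∑ i : Fin N, (A i - B i) * x ^ q ^ e i
        = (∑ i : Fin N, A i * x ^ q ^ e i) - ∑ i : Fin N, B i * x ^ q ^ e i := by
      rw [← Finset.sum_sub_distrib]
      exact Finset.sum_congr rfl fun i _ => by ring
    rw [this, hx, sub_self]
  exact sub_eq_zero.mp (hli (fun i => A i - B i) hzero j)

lemma sum_form (q s k N : ℕ) (hk1 : 2 ≤ k) (hkN : k + 1 < N)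
    (γ : K) (a b : K) (c : ℕ → K) :
    (fun x : K => ∑ j : Fin N,
        (if (j : ℕ) = 0 then a else if (j : ℕ) < k then c (j : ℕ)
          else if (j : ℕ) = k then γ * b else 0) * x ^ q ^ (s * (j : ℕ)))
      = fun x => a * x + (∑ i ∈ Finset.Ioo 0 k, c i * x ^ q ^ (s * i))
          + γ * b * x ^ q ^ (s * k) := by
  classical
  funext x
  rw [Fin.sum_univ_eq_sum_range (fun i =>
    (if i = 0 then a else if i < k then c i else if i = k then γ * b else 0)
      * x ^ q ^ (s * i)) N]
  have hsub : insert 0 (insert k (Finset.Ioo 0 k)) ⊆ Finset.range N := by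
    intro i hi
    simp only [Finset.mem_insert, Finset.mem_Ioo] at hi
    simp only [Finset.mem_range]
    omega
  have hvan : ∀ i ∈ Finset.range N, i ∉ insert 0 (insert k (Finset.Ioo 0 k)) →
      (if i = 0 then a else if i < k then c i else if i = k then γ * b else 0)
        * x ^ q ^ (s * i) = 0 := by
    intro i _ hi
    simp only [Finset.mem_insert, Finset.mem_Ioo] at hi
    push_neg at hi
    obtain ⟨h0, hk, hIoo⟩ := hi
    have hik : k ≤ i := hIoo (Nat.pos_of_ne_zero h0)
    rw [if_neg h0, if_neg (by omega), if_neg hk, zero_mul]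
  rw [← Finset.sum_subset hsub hvan]
  rw [Finset.sum_insert (by simp [Finset.mem_Ioo]; omega),
    Finset.sum_insert (by simp [Finset.mem_Ioo])]
  have e0 : (if 0 = 0 then a else if 0 < k then c 0 else if 0 = k then γ * b else 0)
      * x ^ q ^ (s * 0) = a * x := by simp
  have ek : (if k = 0 then a else if k < k then c k else if k = k then γ * b else 0)
      * x ^ q ^ (s * k) = γ * b * x ^ q ^ (s * k) := by
    rw [if_neg (by omega), if_neg (by omega)]
    simp
  have eI : ∑ i ∈ Finset.Ioo 0 k,
      (if i = 0 then a else if i < k then c i else if i = k then γ * b else 0)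
        * x ^ q ^ (s * i) = ∑ i ∈ Finset.Ioo 0 k, c i * x ^ q ^ (s * i) := by
    refine Finset.sum_congr rfl fun i hi => ?_
    simp only [Finset.mem_Ioo] at hi
    rw [if_neg (by omega), if_pos hi.2]
  rw [e0, ek, eI]
  ring

lemma D_coeffs (q s n k N : ℕ) (hN : N = 2 * n) (hn : 0 < n) (hk1 : 2 ≤ k)
    (hkN : k + 1 < N) (γ : K) {f : K → K} (hf : f ∈ DFun q s n k γ) :
    ∃ A : Fin N → K, (A ⟨0, by omega⟩) ^ q ^ n = A ⟨0, by omega⟩ ∧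
      (∃ b : K, b ^ q ^ n = b ∧ A ⟨k, by omega⟩ = γ * b) ∧
      (∀ j : Fin N, k < (j : ℕ) → A j = 0) ∧
      f = fun x => ∑ j : Fin N, A j * x ^ q ^ (s * (j : ℕ)) := by
  classical
  obtain ⟨a, b, ha, hb, c, rfl⟩ := hf
  refine ⟨fun j => if (j : ℕ) = 0 then a else if (j : ℕ) < k then c (j : ℕ)
    else if (j : ℕ) = k then γ * b else 0, ?_, ⟨b, hb, ?_⟩, ?_,
    (sum_form q s k N hk1 hkN γ a b c).symm⟩
  · simpa using ha
  · simp only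
    rw [if_neg (by omega), if_neg (by omega)]
    simp
  · intro j hj
    simp only
    rw [if_neg (by omega), if_neg (by omega), if_neg (by omega)]

lemma mono_mem (q s n k : ℕ) (γ : K) (hq : q ≠ 0) (t : ℕ) (ht0 : 0 < t)
    (htk : t < k) (u : K) :
    (fun x : K => u * x ^ q ^ (s * t)) ∈ DFun q s n k γ := by
  classical
  refine ⟨0, 0, zero_pow (pow_ne_zero _ hq), zero_pow (pow_ne_zero _ hq),
    fun i => if i = t then u else 0, ?_⟩
  funext x
  have hsum : ∑ i ∈ Finset.Ioo 0 k, (if i = t then u else 0) * x ^ q ^ (s * i)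
      = u * x ^ q ^ (s * t) := by
    have hterm : ∀ i, (if i = t then u else 0) * x ^ q ^ (s * i)
        = if i = t then u * x ^ q ^ (s * i) else 0 := fun i => by
      split <;> simp
    simp_rw [hterm]
    rw [Finset.sum_ite_eq' (Finset.Ioo 0 k) t (fun i => u * x ^ q ^ (s * i)),
      if_pos (Finset.mem_Ioo.mpr ⟨ht0, htk⟩)]
  rw [hsum]
  ring

lemma fin_sub_eq (N : ℕ) [NeZero N] (a b : ℕ) (hb : b ≤ a) (ha : a < N) :
    (⟨a, ha⟩ - ⟨b, by omega⟩ : Fin N) = ⟨a - b, by omega⟩ := by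
  have h : (⟨a - b, by omega⟩ + ⟨b, by omega⟩ : Fin N) = ⟨a, ha⟩ := by
    apply Fin.ext
    simp [Fin.add_def, Nat.sub_add_cancel hb, Nat.mod_eq_of_lt ha]
  exact (eq_sub_of_add_eq h).symm

lemma comp_eq (q s N : ℕ) (hN : 0 < N) (hK : Fintype.card K = q ^ N)
    (A : Fin N → K) (t : Fin N) (u : K) :
    ((fun x : K => ∑ j : Fin N, A j * x ^ q ^ (s * (j : ℕ)))
        ∘ fun x : K => u * x ^ q ^ (s * (t : ℕ)))
      = fun x : K => ∑ j : Fin N,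
          (A (j - t) * u ^ q ^ (s * ((j - t : Fin N) : ℕ))) * x ^ q ^ (s * (j : ℕ)) := by
  haveI : NeZero N := ⟨by omega⟩
  funext x
  simp only [Function.comp_apply]
  calc ∑ j : Fin N, A j * (u * x ^ q ^ (s * (t : ℕ))) ^ q ^ (s * (j : ℕ))
      = ∑ j : Fin N, (A ((j + t) - t) * u ^ q ^ (s * (((j + t : Fin N) - t : Fin N) : ℕ)))
          * x ^ q ^ (s * ((j + t : Fin N) : ℕ)) := by
        refine Finset.sum_congr rfl fun j _ => ?_
        rw [add_sub_cancel_right]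
        rw [mul_pow, ← pow_mul, ← pow_add]
        have hcong : x ^ q ^ (s * (t : ℕ) + s * (j : ℕ))
            = x ^ q ^ (s * ((j + t : Fin N) : ℕ)) := by
          apply aux_congr q N hK
          have hval : ((j + t : Fin N) : ℕ) = ((j : ℕ) + (t : ℕ)) % N := Fin.val_add j t
          rw [hval]
          have : s * (((j : ℕ) + (t : ℕ)) % N) ≡ s * ((j : ℕ) + (t : ℕ)) [MOD N] :=
            Nat.ModEq.mul_left s (Nat.mod_modEq _ N)
          calc (s * (t : ℕ) + s * (j : ℕ)) % N = (s * ((j : ℕ) + (t : ℕ))) % N := by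
                ring_nf
          _ = (s * (((j : ℕ) + (t : ℕ)) % N)) % N := this.symm
        rw [hcong]; ring
    _ = ∑ j : Fin N, (A (j - t) * u ^ q ^ (s * ((j - t : Fin N) : ℕ)))
          * x ^ q ^ (s * (j : ℕ)) := by
        exact Equiv.sum_comp (Equiv.addRight t)
          (fun j => (A (j - t) * u ^ q ^ (s * ((j - t : Fin N) : ℕ)))
            * x ^ q ^ (s * (j : ℕ)))

lemma card_fixed_le (q m : ℕ) [DecidableEq K]
    (hq : 2 ≤ q) (hm : 0 < m) :
    (Finset.univ.filter (fun b : K => b ^ q ^ m = b)).card ≤ q ^ m := by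
  classical
  set P : Polynomial K := Polynomial.X ^ (q ^ m) - Polynomial.X with hP
  have hqm : 2 ≤ q ^ m := by
    calc 2 = 2 ^ 1 := rfl
    _ ≤ q ^ m := (Nat.pow_le_pow_left hq 1).trans (Nat.pow_le_pow_right (by omega) hm)
  have hcoeff : P.coeff (q ^ m) = 1 := by
    simp [hP, Polynomial.coeff_X_pow, Polynomial.coeff_X, show ¬ (1 = q ^ m) by omega]
  have hP0 : P ≠ 0 := fun h => by simp [h] at hcoeff
  have hdeg : P.natDegree ≤ q ^ m := by
    refine (Polynomial.natDegree_sub_le _ _).trans ?_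
    simp [Polynomial.natDegree_X_pow, Polynomial.natDegree_X]
    omega
  refine le_trans (Polynomial.card_le_degree_of_subset_roots ?_) hdeg
  intro b hb
  rw [Finset.mem_val, Finset.mem_filter] at hb
  rw [Polynomial.mem_roots hP0]
  simp [hP, Polynomial.IsRoot, sub_eq_zero, hb.2]

end Aux

/-- For `2 ≤ k ≤ 2n-2`, the right nucleus
`N_r(D_{k,s}(γ)) = { φ linearized : φ ∘ f ∈ D for all f ∈ D }` equals
`{ aX : a ∈ F_{q^n} }`. -/
theorem D_code_right_nucleus (q s n k : ℕ) (hn : 0 < n) (hs : Nat.Coprime s (2 * n))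
    (hk1 : 2 ≤ k) (hk2 : k ≤ 2 * n - 2)
    (K : Type*) [Field K] [Fintype K] (hK : Fintype.card K = q ^ (2 * n))
    (γ : K)
    (hγ : ¬ ∃ z : K, z ^ q = z ∧ z ^ 2 = γ ^ (∑ i ∈ Finset.range (2 * n), q ^ i)) :
    {φ : K → K | IsLinPoly q (2 * n) φ ∧
        ∀ f ∈ DFun q s n k γ, φ ∘ f ∈ DFun q s n k γ}
      = {φ : K → K | ∃ a : K, a ^ q ^ n = a ∧ φ = fun x => a * x} := by
  classical
  haveI : NeZero (2 * n) := ⟨by omega⟩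
  have hq2 : 2 ≤ q := by
    have h1 : 1 < Fintype.card K := Fintype.one_lt_card
    rw [hK] at h1
    by_contra hq
    have : q ^ (2 * n) ≤ 1 ^ (2 * n) := Nat.pow_le_pow_left (by omega) _
    simp at this; omega
  have hkN : k + 1 < 2 * n := by omega
  have hγ0 : γ ≠ 0 := by
    intro h
    apply hγ
    refine ⟨0, by simp [zero_pow (show q ≠ 0 by omega)], ?_⟩
    rw [h]
    have hE : (∑ i ∈ Finset.range (2 * n), q ^ i) ≠ 0 := by
      have : 0 < ∑ i ∈ Finset.range (2 * n), q ^ i :=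
        Finset.sum_pos (fun i _ => Nat.pow_pos (by omega))
          (Finset.nonempty_range_iff.mpr (by omega))
      omega
    simp [zero_pow hE]
  ext φ
  simp only [Set.mem_setOf_eq]
  constructor
  · rintro ⟨hlin, hD⟩
    -- φ itself is in D
    have hid : (fun x : K => (1:K) * x
        + (∑ i ∈ Finset.Ioo 0 k, (fun _ : ℕ => (0:K)) i * x ^ q ^ (s * i))
        + γ * 0 * x ^ q ^ (s * k)) ∈ DFun q s n k γ :=
      ⟨1, 0, one_pow _, zero_pow (pow_ne_zero _ (by omega)), fun _ => 0, rfl⟩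
    have hφD : φ ∈ DFun q s n k γ := by
      have h2 := hD _ hid
      have heq : φ ∘ (fun x : K => (1:K) * x
          + (∑ i ∈ Finset.Ioo 0 k, (fun _ : ℕ => (0:K)) i * x ^ q ^ (s * i))
          + γ * 0 * x ^ q ^ (s * k)) = φ := by
        funext x; simp
      rwa [heq] at h2
    obtain ⟨A, hA0, -, hAhigh, hArep⟩ :=
      D_coeffs q s n k (2 * n) rfl hn hk1 hkN γ hφD
    -- main extraction
    have key : ∀ t : Fin (2 * n), 0 < (t : ℕ) → (t : ℕ) < k → ∀ u : K,
        (∃ b : K, b ^ q ^ n = b ∧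
          A ((⟨k, by omega⟩ : Fin (2 * n)) - t)
            * u ^ q ^ (s * (((⟨k, by omega⟩ : Fin (2 * n)) - t : Fin (2 * n)) : ℕ))
            = γ * b)
        ∧ ∀ j : Fin (2 * n), k < (j : ℕ) →
            A (j - t) * u ^ q ^ (s * ((j - t : Fin (2 * n)) : ℕ)) = 0 := by
      intro t ht0 htk u
      have hmem := mono_mem q s n k γ (by omega) (t : ℕ) ht0 htk u
      have hcomp := hD _ hmem
      obtain ⟨A', hA'0, hA'k, hA'high, hA'rep⟩ :=
        D_coeffs q s n k (2 * n) rfl hn hk1 hkN γ hcomp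
      have hBrep : φ ∘ (fun x : K => u * x ^ q ^ (s * (t : ℕ)))
          = fun x : K => ∑ j : Fin (2 * n),
              (A (j - t) * u ^ q ^ (s * ((j - t : Fin (2 * n)) : ℕ)))
                * x ^ q ^ (s * (j : ℕ)) := by
        rw [hArep]
        exact comp_eq q s (2 * n) (by omega) hK A t u
      have hAB : A' = fun j : Fin (2 * n) =>
          A (j - t) * u ^ q ^ (s * ((j - t : Fin (2 * n)) : ℕ)) :=
        coeff_unique q s (2 * n) hK (by omega) hs (hA'rep.symm.trans hBrep)
      constructor
      · obtain ⟨b, hb1, hb2⟩ := hA'k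
        exact ⟨b, hb1, (congrFun hAB _).symm.trans hb2⟩
      · intro j hj
        exact (congrFun hAB j).symm.trans (hA'high j hj)
    -- kill slot k
    have hk_slot : A ⟨k, by omega⟩ = 0 := by
      have h1 := (key ⟨1, by omega⟩ (by simp) (by simpa using (by omega : 1 < k)) 1).2
        ⟨k + 1, by omega⟩ (by simpa using (by omega : k < k + 1))
      rw [fin_sub_eq (2 * n) (k + 1) 1 (by omega) (by omega)] at h1
      simpa using h1
    -- kill middle slots
    have hmid : ∀ (i : ℕ) (_ : 0 < i) (_ : i < k), A ⟨i, by omega⟩ = 0 := by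
      intro i hi0 hik
      by_contra hAi
      have hslot : ((⟨k, by omega⟩ : Fin (2 * n)) - ⟨k - i, by omega⟩ : Fin (2 * n))
          = ⟨i, by omega⟩ := by
        rw [fin_sub_eq (2 * n) k (k - i) (by omega) (by omega)]
        exact Fin.ext (by simp; omega)
      have hkey : ∀ u : K, ∃ b : K, b ^ q ^ n = b ∧
          A ⟨i, by omega⟩ * u ^ q ^ (s * i) = γ * b := by
        intro u
        have h1 := (key ⟨k - i, by omega⟩ (by simpa using (by omega : 0 < k - i))
          (by simpa using (by omega : k - i < k)) u).1
        rw [hslot] at h1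
        exact h1
      have hinj : Function.Injective
          (fun u : K => γ⁻¹ * (A ⟨i, by omega⟩ * u ^ q ^ (s * i))) := by
        intro u v huv
        have h1 : A ⟨i, by omega⟩ * u ^ q ^ (s * i)
            = A ⟨i, by omega⟩ * v ^ q ^ (s * i) :=
          mul_left_cancel₀ (inv_ne_zero hγ0) huv
        exact pow_frob_inj q (2 * n) hK (s * i) (mul_left_cancel₀ hAi h1)
      have hmaps : ∀ u : K,
          (γ⁻¹ * (A ⟨i, by omega⟩ * u ^ q ^ (s * i)))
            ∈ Finset.univ.filter (fun b : K => b ^ q ^ n = b) := by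
        intro u
        obtain ⟨b, hb1, hb2⟩ := hkey u
        rw [Finset.mem_filter]
        refine ⟨Finset.mem_univ _, ?_⟩
        have hbe : γ⁻¹ * (A ⟨i, by omega⟩ * u ^ q ^ (s * i)) = b := by
          rw [hb2]
          field_simp
        rw [hbe]
        exact hb1
      have hcard := Finset.card_le_card_of_injOn
        (s := (Finset.univ : Finset K))
        (t := Finset.univ.filter (fun b : K => b ^ q ^ n = b))
        (fun u : K => γ⁻¹ * (A ⟨i, by omega⟩ * u ^ q ^ (s * i)))
        (fun u _ => hmaps u) hinj.injOn
      rw [Finset.card_univ, hK] at hcard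
      have hle := card_fixed_le (K := K) q n hq2 hn
      have hlt : q ^ n < q ^ (2 * n) :=
        Nat.pow_lt_pow_right (by omega) (by omega)
      omega
    -- all nonzero slots vanish
    have hall : ∀ j : Fin (2 * n), j ≠ ⟨0, by omega⟩ → A j = 0 := by
      intro j hj
      rcases Nat.lt_trichotomy (j : ℕ) k with h | h | h
      · rcases Nat.eq_zero_or_pos (j : ℕ) with h0 | h0
        · exact absurd (Fin.ext h0) hj
        · have := hmid (j : ℕ) h0 h
          have hjeq : (⟨(j : ℕ), by omega⟩ : Fin (2 * n)) = j := Fin.ext rfl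
          rwa [hjeq] at this
      · have hjeq : j = ⟨k, by omega⟩ := Fin.ext h
        rw [hjeq]
        exact hk_slot
      · exact hAhigh j h
    refine ⟨A ⟨0, by omega⟩, hA0, ?_⟩
    rw [hArep]
    funext x
    rw [Finset.sum_eq_single (⟨0, by omega⟩ : Fin (2 * n))]
    · simp
    · intro b _ hb
      rw [hall b hb, zero_mul]
    · intro h
      exact absurd (Finset.mem_univ _) h
  · rintro ⟨a, ha, rfl⟩
    constructor
    · refine ⟨fun i => if i = ⟨0, by omega⟩ then a else 0, ?_⟩
      funext x
      rw [Finset.sum_eq_single (⟨0, by omega⟩ : Fin (2 * n))]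
      · simp
      · intro b _ hb
        simp [hb, show b ≠ 0 from fun h => hb (h.trans (Fin.ext (by simp)))]
      · intro h
        exact absurd (Finset.mem_univ _) h
    · intro f hf
      obtain ⟨a', b', ha', hb', c, rfl⟩ := hf
      refine ⟨a * a', a * b', ?_, ?_, fun i => a * c i, ?_⟩
      · rw [mul_pow, ha, ha']
      · rw [mul_pow, ha, hb']
      · funext x
        simp only [Function.comp_apply]
        rw [mul_add, mul_add, Finset.mul_sum]
        have hsum : ∑ i ∈ Finset.Ioo 0 k, a * (c i * x ^ q ^ (s * i))
            = ∑ i ∈ Finset.Ioo 0 k, a * c i * x ^ q ^ (s * i) :=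
          Finset.sum_congr rfl fun i _ => by ring
        rw [hsum]
        ring
end

section
/- Let 2 ≤ k ≤ 2n−2 and gcd(s,2n)=1, with γ ∈ F_{q^{2n}} such that N_{q^{2n}/q}(γ) is a non-square in F_q. Then the middle nucleus of D_{k,s}(γ), namely N_m(D) = { φ a linearized polynomial : f ∘ φ ∈ D for all f ∈ D }, equals { aX : a ∈ F_{q^n} }. -/
open Finset Polynomial

section AuxLemmas

variable {K : Type*} [Field K] [Fintype K]

/-- reduce exponents mod e -/
lemma pow_q_reduce_s13 {q e : ℕ} (hK : Fintype.card K = q ^ e) (x : K) (m : ℕ) :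
    x ^ q ^ m = x ^ q ^ (m % e) := by
  have h1 : x ^ q ^ (e * (m / e)) = x := by
    rw [pow_mul, ← hK]
    exact FiniteField.pow_card_pow _ _
  calc x ^ q ^ m = (x ^ q ^ (e * (m / e))) ^ q ^ (m % e) := by
        rw [← pow_mul, ← pow_add, Nat.div_add_mod]
    _ = x ^ q ^ (m % e) := by rw [h1]

/-- uniqueness of coefficients of linearized polynomials -/
lemma lin_unique {q e : ℕ} (hK : Fintype.card K = q ^ e) (hq : 2 ≤ q) (he : 0 < e)
    (m : ℕ → ℕ) (hm : ∀ i < e, m i < e)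
    (hminj : ∀ i < e, ∀ j < e, m i = m j → i = j) (v w : ℕ → K)
    (h : ∀ x : K, ∑ i ∈ range e, v i * x ^ q ^ m i = ∑ i ∈ range e, w i * x ^ q ^ m i) :
    ∀ i < e, v i = w i := by
  classical
  set P : K[X] := ∑ i ∈ range e, C (v i - w i) * X ^ (q ^ m i) with hP
  have hdeg : P.natDegree < Fintype.card K := by
    have h1 : P.natDegree ≤ q ^ (e - 1) := by
      apply Polynomial.natDegree_sum_le_of_forall_le
      intro i hi
      refine (Polynomial.natDegree_C_mul_X_pow_le _ _).trans ?_
      exact Nat.pow_le_pow_right (by omega) (by have := hm i (mem_range.mp hi); omega)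
    have h2 : q ^ (e - 1) < q ^ e := Nat.pow_lt_pow_right (by omega) (by omega)
    rw [hK]; omega
  have heval : ∀ x : K, P.eval x = 0 := by
    intro x
    simp only [hP, Polynomial.eval_finset_sum, Polynomial.eval_mul, Polynomial.eval_C,
      Polynomial.eval_pow, Polynomial.eval_X, sub_mul]
    rw [Finset.sum_sub_distrib, h x, sub_self]
  have hP0 : P = 0 := by
    apply Polynomial.eq_zero_of_natDegree_lt_card_of_eval_eq_zero' P Finset.univ
      (fun i _ => heval i)
    rwa [Finset.card_univ]
  intro i hi
  have hc := congrArg (fun p => Polynomial.coeff p (q ^ m i)) hP0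
  simp only [hP, Polynomial.finset_sum_coeff, Polynomial.coeff_C_mul, Polynomial.coeff_X_pow,
    Polynomial.coeff_zero] at hc
  rw [Finset.sum_eq_single i] at hc
  · rw [if_pos rfl, mul_one] at hc
    exact sub_eq_zero.mp hc
  · intro j hj hne
    rw [if_neg, mul_zero]
    intro hqe
    exact hne (hminj j (mem_range.mp hj) i hi (Nat.pow_right_injective hq hqe.symm))
  · intro hnotmem; exact absurd (mem_range.mpr hi) hnotmem

/-- cardinality bound from surjectivity onto γ * (fixed set of x ↦ x^r) -/
lemma card_le_of_surj (r : ℕ) (hr : 2 ≤ r) (γ : K)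
    (h : ∀ y : K, ∃ b : K, b ^ r = b ∧ y = γ * b) : Fintype.card K ≤ r := by
  classical
  have hγ : γ ≠ 0 := by
    obtain ⟨b, _, hb⟩ := h 1
    intro h0; rw [h0, zero_mul] at hb; exact one_ne_zero hb
  set P : K[X] := X ^ r - X with hP
  have hPne : P ≠ 0 := by
    intro h0
    have := congrArg (fun p => Polynomial.coeff p r) h0
    simp only [hP, Polynomial.coeff_sub, Polynomial.coeff_X_pow, if_pos rfl,
      Polynomial.coeff_zero, Polynomial.coeff_X, if_neg (by omega : ¬ 1 = r)] at this
    norm_num at this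
  have hPdeg : P.natDegree ≤ r := by
    refine (Polynomial.natDegree_sub_le _ _).trans ?_
    simp [Polynomial.natDegree_X_pow]
    omega
  set T : Finset K := Finset.univ.filter (fun b => b ^ r = b) with hT
  have hTcard : T.card ≤ r := by
    have hsub : T ⊆ P.roots.toFinset := by
      intro b hb
      rw [Multiset.mem_toFinset, Polynomial.mem_roots hPne]
      simp only [hT, Finset.mem_filter] at hb
      simp [hP, Polynomial.IsRoot, sub_eq_zero, hb.2]
    calc T.card ≤ P.roots.toFinset.card := Finset.card_le_card hsub
      _ ≤ Multiset.card P.roots := Multiset.toFinset_card_le _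
      _ ≤ P.natDegree := Polynomial.card_roots' P
      _ ≤ r := hPdeg
  have hinj : Function.Injective (fun y : K => γ⁻¹ * y) :=
    fun a b hab => by field_simp at hab; exact hab
  have himg : ∀ y : K, γ⁻¹ * y ∈ T := by
    intro y
    obtain ⟨b, hb1, hb2⟩ := h y
    have : γ⁻¹ * y = b := by rw [hb2]; field_simp
    rw [this]
    simp [hT, hb1]
  calc Fintype.card K = (Finset.univ.image (fun y : K => γ⁻¹ * y)).card := by
        rw [Finset.card_image_of_injective _ hinj, Finset.card_univ]
    _ ≤ T.card := Finset.card_le_card (by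
        intro z hz
        obtain ⟨y, _, rfl⟩ := Finset.mem_image.mp hz
        exact himg y)
    _ ≤ r := hTcard

end AuxLemmas

lemma range_split (k : ℕ) (hk : 2 ≤ k) :
    Finset.range (k+1) = insert 0 (insert k (Finset.Ioo 0 k)) := by
  ext i
  simp only [mem_range, mem_insert, mem_Ioo]
  omega

lemma DFun_iff (q s n k : ℕ) (hk : 2 ≤ k) {K : Type*} [Field K] (γ : K) (f : K → K) :
    f ∈ DFun q s n k γ ↔ ∃ d : ℕ → K, (d 0) ^ q ^ n = d 0 ∧
      (∃ b : K, b ^ q ^ n = b ∧ d k = γ * b) ∧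
      f = fun x => ∑ i ∈ Finset.range (k+1), d i * x ^ q ^ (s * i) := by
  have h0k : (0:ℕ) ∉ insert k (Finset.Ioo 0 k) := by
    simp only [mem_insert, mem_Ioo]; omega
  have hkI : k ∉ Finset.Ioo 0 k := by simp
  constructor
  · rintro ⟨a, b, ha, hb, c, rfl⟩
    classical
    refine ⟨fun i => if i = 0 then a else if i = k then γ * b else c i,
      by beta_reduce; rw [if_pos rfl]; exact ha,
      ⟨b, hb, by beta_reduce; rw [if_neg (by omega : ¬ k = 0), if_pos rfl]⟩, ?_⟩
    funext x
    rw [range_split k hk, Finset.sum_insert h0k, Finset.sum_insert hkI]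
    have h1 : ∑ i ∈ Finset.Ioo 0 k,
        (if i = 0 then a else if i = k then γ * b else c i) * x ^ q ^ (s * i)
        = ∑ i ∈ Finset.Ioo 0 k, c i * x ^ q ^ (s * i) := Finset.sum_congr rfl fun i hi => by
      simp only [mem_Ioo] at hi
      rw [if_neg (by omega), if_neg (by omega)]
    beta_reduce
    rw [h1, if_pos rfl, if_neg (by omega : ¬ k = 0), if_pos rfl]
    simp only [mul_zero, pow_zero, pow_one]
    ring
  · rintro ⟨d, h0, ⟨b, hb, hkb⟩, rfl⟩
    refine ⟨d 0, b, h0, hb, d, ?_⟩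
    funext x
    rw [range_split k hk, Finset.sum_insert h0k, Finset.sum_insert hkI, hkb]
    simp only [mul_zero, pow_zero, pow_one]
    ring

/-- For `2 ≤ k ≤ 2n-2`, the middle nucleus
`N_m(D_{k,s}(γ)) = { φ linearized : f ∘ φ ∈ D for all f ∈ D }` equals
`{ aX : a ∈ F_{q^n} }`. -/
theorem D_code_middle_nucleus (q s n k : ℕ) (hn : 0 < n) (hs : Nat.Coprime s (2 * n))
    (hk1 : 2 ≤ k) (hk2 : k ≤ 2 * n - 2)
    (K : Type*) [Field K] [Fintype K] (hK : Fintype.card K = q ^ (2 * n))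
    (γ : K)
    (hγ : ¬ ∃ z : K, z ^ q = z ∧ z ^ 2 = γ ^ (∑ i ∈ Finset.range (2 * n), q ^ i)) :
    {φ : K → K | IsLinPoly q (2 * n) φ ∧
        ∀ f ∈ DFun q s n k γ, f ∘ φ ∈ DFun q s n k γ}
      = {φ : K → K | ∃ a : K, a ^ q ^ n = a ∧ φ = fun x => a * x} := by
  classical
  have hq2 : 2 ≤ q := by
    by_contra hq
    have h1 : q ^ (2*n) ≤ 1 ^ (2*n) := Nat.pow_le_pow_left (by omega) _
    have h2 := Fintype.one_lt_card (α := K)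
    rw [hK] at h2
    simp only [one_pow] at h1
    omega
  have hn2 : 2 ≤ n := by omega
  set e := 2 * n with he_def
  haveI : NeZero e := ⟨by omega⟩
  have hke : k + 2 ≤ e := by omega
  have hqn2 : 2 ≤ q ^ n := le_trans hq2 (Nat.le_self_pow (by omega) q)
  have hqnlt : q ^ n < q ^ e := Nat.pow_lt_pow_right (by omega) (by omega)
  -- characteristic
  haveI := ringChar.charP K
  set p := ringChar K with hp_def
  have hp : p.Prime := CharP.char_is_prime K p
  obtain ⟨d, -, hcard⟩ := FiniteField.card K p
  have hqdvd : q ∣ p ^ (d:ℕ) := by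
    rw [← hcard, hK]
    exact dvd_pow_self q (by omega : e ≠ 0)
  obtain ⟨t, -, hqt⟩ := (Nat.dvd_prime_pow hp).mp hqdvd
  haveI : ExpChar K p := ExpChar.prime hp
  have hsum_pow : ∀ (N : ℕ) {ι : Type} (sfin : Finset ι) (g : ι → K),
      (∑ i ∈ sfin, g i) ^ q ^ N = ∑ i ∈ sfin, (g i) ^ q ^ N := by
    intro N ι sfin g
    rw [hqt, ← pow_mul]
    exact sum_pow_char_pow p (t*N) sfin g
  -- ZMod e facts
  have hval : ∀ i : ℕ, ((s : ZMod e) * (i : ZMod e)).val = (s * i) % e := by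
    intro i; rw [← Nat.cast_mul, ZMod.val_natCast]
  have hs_unit : IsUnit (s : ZMod e) :=
    ⟨ZMod.unitOfCoprime s hs, ZMod.coe_unitOfCoprime s hs⟩
  have hsum_zmod : ∀ g : ZMod e → K,
      ∑ i : ZMod e, g i = ∑ i ∈ Finset.range e, g (i : ZMod e) := by
    intro g
    apply Finset.sum_nbij' (i := fun j : ZMod e => j.val) (j := fun i : ℕ => (i : ZMod e))
    · intro a _; exact Finset.mem_range.mpr (ZMod.val_lt a)
    · intro a _; exact Finset.mem_univ _
    · intro a _; exact ZMod.natCast_rightInverse a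
    · intro a ha; exact ZMod.val_cast_of_lt (Finset.mem_range.mp ha)
    · intro a _; rw [ZMod.natCast_rightInverse a]
  set T : (ZMod e → K) → (K → K) :=
    fun w x => ∑ i : ZMod e, w i * x ^ q ^ ((s : ZMod e) * i).val with hT
  have Tinj : ∀ w w' : ZMod e → K, T w = T w' → w = w' := by
    intro w w' h
    have h2 : ∀ i < e, w (i : ZMod e) = w' (i : ZMod e) := by
      refine lin_unique hK hq2 (by omega) (fun i => (s * i) % e)
        (fun i _ => Nat.mod_lt _ (by omega)) ?_ _ _ ?_
      · intro i hi j hj hij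
        beta_reduce at hij
        have hc : ((s * i : ℕ) : ZMod e) = ((s * j : ℕ) : ZMod e) := by
          rw [← ZMod.natCast_mod (s*i) e, ← ZMod.natCast_mod (s*j) e, hij]
        rw [Nat.cast_mul, Nat.cast_mul] at hc
        have := hs_unit.mul_left_cancel hc
        have := congrArg ZMod.val this
        rwa [ZMod.val_cast_of_lt hi, ZMod.val_cast_of_lt hj] at this
      · intro x
        have hx := congrFun h x
        simp only [hT] at hx
        rw [hsum_zmod (fun i => w i * x ^ q ^ ((s : ZMod e) * i).val),
          hsum_zmod (fun i => w' i * x ^ q ^ ((s : ZMod e) * i).val)] at hx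
        calc ∑ i ∈ Finset.range e, w ↑i * x ^ q ^ ((s * i) % e)
            = ∑ i ∈ Finset.range e, w ↑i * x ^ q ^ (((s:ZMod e) * ↑i).val) :=
              Finset.sum_congr rfl fun i _ => by rw [hval i]
          _ = ∑ i ∈ Finset.range e, w' ↑i * x ^ q ^ (((s:ZMod e) * ↑i).val) := hx
          _ = ∑ i ∈ Finset.range e, w' ↑i * x ^ q ^ ((s * i) % e) :=
              Finset.sum_congr rfl fun i _ => by rw [hval i]
    funext j
    have := h2 j.val (ZMod.val_lt j)
    rwa [ZMod.natCast_rightInverse j] at this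
  -- membership characterization in terms of T-coefficients
  have key : ∀ w : ZMod e → K, T w ∈ DFun q s n k γ →
      ((w 0) ^ q ^ n = w 0) ∧ (∃ b : K, b ^ q ^ n = b ∧ w (k : ZMod e) = γ * b) ∧
      (∀ i : ZMod e, k < i.val → w i = 0) := by
    intro w hw
    rw [DFun_iff q s n k hk1] at hw
    obtain ⟨dc, hd0, hdk, hdf⟩ := hw
    set w' : ZMod e → K := fun i => if i.val ≤ k then dc i.val else 0 with hw'
    have hTw' : T w' = fun x => ∑ i ∈ Finset.range (k+1), dc i * x ^ q ^ (s * i) := by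
      funext x
      simp only [hT]
      calc ∑ i : ZMod e, w' i * x ^ q ^ ((s : ZMod e) * i).val
          = ∑ i ∈ Finset.range e, w' ↑i * x ^ q ^ ((s * i) % e) := by
            rw [hsum_zmod (fun i => w' i * x ^ q ^ ((s : ZMod e) * i).val)]
            exact Finset.sum_congr rfl fun i _ => by rw [hval i]
        _ = ∑ i ∈ Finset.range (k+1), w' ↑i * x ^ q ^ ((s * i) % e) := by
            symm
            apply Finset.sum_subset (Finset.range_subset_range.mpr (by omega))
            intro i hie hik
            have hnk : ¬ ((i : ZMod e) : ZMod e).val ≤ k := by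
              rw [ZMod.val_cast_of_lt (Finset.mem_range.mp hie)]
              simp only [Finset.mem_range] at hik
              omega
            simp only [hw']
            rw [if_neg hnk, zero_mul]
        _ = ∑ i ∈ Finset.range (k+1), dc i * x ^ q ^ (s * i) := by
            apply Finset.sum_congr rfl
            intro i hi
            have hik : i ≤ k := by
              simp only [Finset.mem_range] at hi; omega
            have hie : i < e := by omega
            simp only [hw']
            rw [ZMod.val_cast_of_lt hie, if_pos hik, ← pow_q_reduce_s13 hK]
    have hww : w = w' := Tinj w w' (by rw [hTw', hdf])
    refine ⟨?_, ?_, ?_⟩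
    · rw [hww]
      simp only [hw', ZMod.val_zero, if_pos (Nat.zero_le k)]
      exact hd0
    · obtain ⟨b, hb1, hb2⟩ := hdk
      refine ⟨b, hb1, ?_⟩
      rw [hww]
      simp only [hw', ZMod.val_cast_of_lt (show k < e by omega), if_pos (le_refl k)]
      exact hb2
    · intro i hi
      rw [hww]
      simp only [hw']
      rw [if_neg (by omega)]
  -- composition formula
  have hexp : ∀ (j₀ : ℕ) (i : ZMod e),
      (((s:ZMod e) * i).val + s * j₀) % e = ((s:ZMod e) * (i + (j₀ : ZMod e))).val := by
    intro j₀ i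
    rw [← ZMod.val_natCast]
    congr 1
    push_cast [ZMod.natCast_val, ZMod.cast_id]
    ring
  have hcomp : ∀ (j₀ : ℕ) (c₀ : K) (u : ZMod e → K),
      (fun x => c₀ * x ^ q ^ (s * j₀)) ∘ T u
        = T (fun i => c₀ * (u (i - (j₀ : ZMod e))) ^ q ^ (s * j₀)) := by
    intro j₀ c₀ u
    funext x
    simp only [hT, Function.comp_apply]
    rw [hsum_pow, Finset.mul_sum]
    apply Fintype.sum_equiv (Equiv.addRight (j₀ : ZMod e))
    intro i
    simp only [Equiv.coe_addRight, add_sub_cancel_right]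
    calc c₀ * (u i * x ^ q ^ ((s:ZMod e) * i).val) ^ q ^ (s * j₀)
        = c₀ * (u i) ^ q ^ (s * j₀) * x ^ (q ^ ((s:ZMod e) * i).val * q ^ (s * j₀)) := by
          rw [mul_pow, ← pow_mul]; ring
      _ = c₀ * (u i) ^ q ^ (s * j₀) * x ^ q ^ (((s:ZMod e) * i).val + s * j₀) := by
          rw [← pow_add]
      _ = c₀ * (u i) ^ q ^ (s * j₀) * x ^ q ^ ((s:ZMod e) * (i + (j₀:ZMod e))).val := by
          rw [pow_q_reduce_s13 hK x (((s:ZMod e) * i).val + s * j₀), hexp j₀ i]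
  -- monomials in D
  have hq_pow_ne : ∀ N : ℕ, q ^ N ≠ 0 := fun N => pow_ne_zero N (by omega)
  have hmono : ∀ j₀, 0 < j₀ → j₀ < k → ∀ c₀ : K,
      (fun x : K => c₀ * x ^ q ^ (s * j₀)) ∈ DFun q s n k γ := by
    intro j₀ h1 h2 c₀
    rw [DFun_iff q s n k hk1]
    refine ⟨fun i => if i = j₀ then c₀ else 0,
      by beta_reduce; rw [if_neg (by omega)]; exact zero_pow (hq_pow_ne n),
      ⟨0, zero_pow (hq_pow_ne n), by beta_reduce; rw [if_neg (by omega), mul_zero]⟩, ?_⟩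
    funext x
    rw [Finset.sum_eq_single j₀]
    · beta_reduce; rw [if_pos rfl]
    · intro i _ hne
      beta_reduce; rw [if_neg hne, zero_mul]
    · intro hnm
      exact absurd (Finset.mem_range.mpr (by omega)) hnm
  -- identity in D
  have hid : (id : K → K) ∈ DFun q s n k γ := by
    rw [DFun_iff q s n k hk1]
    refine ⟨fun i => if i = 0 then 1 else 0,
      by beta_reduce; rw [if_pos rfl]; exact one_pow _,
      ⟨0, zero_pow (hq_pow_ne n), by beta_reduce; rw [if_neg (by omega), mul_zero]⟩, ?_⟩
    funext x
    rw [Finset.sum_eq_single 0]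
    · beta_reduce; rw [if_pos rfl, mul_zero, pow_zero, pow_one, one_mul]; rfl
    · intro i _ hne
      beta_reduce; rw [if_neg hne, zero_mul]
    · intro hnm
      exact absurd (Finset.mem_range.mpr (by omega)) hnm
  -- main set equality
  ext φ
  simp only [Set.mem_setOf_eq]
  constructor
  · rintro ⟨⟨A, hA⟩, hnuc⟩
    set u : ZMod e → K := fun i => A ⟨((s:ZMod e) * i).val, ZMod.val_lt _⟩ with hu
    have hTu : T u = φ := by
      funext x
      rw [hA]
      simp only [hT, hu]
      apply Fintype.sum_bijective
        (fun j : ZMod e => (⟨((s:ZMod e) * j).val, ZMod.val_lt _⟩ : Fin e))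
      · rw [Fintype.bijective_iff_injective_and_card]
        constructor
        · intro a b hab
          have h1 : ((s:ZMod e) * a).val = ((s:ZMod e) * b).val := congrArg Fin.val hab
          have h2 : (s:ZMod e) * a = (s:ZMod e) * b := ZMod.val_injective e h1
          exact hs_unit.mul_left_cancel h2
        · simp [ZMod.card]
      · intro i
        rfl
    have hφD : T u ∈ DFun q s n k γ := by
      rw [hTu]
      have := hnuc id hid
      rwa [Function.id_comp] at this
    obtain ⟨hu0, -, -⟩ := key u hφD
    have hKEY : ∀ j₀ : ℕ, 0 < j₀ → j₀ < k → ∀ c₀ : K,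
        ((c₀ * (u (0 - (j₀:ZMod e))) ^ q ^ (s * j₀)) ^ q ^ n
            = c₀ * (u (0 - (j₀:ZMod e))) ^ q ^ (s * j₀)) ∧
        (∃ b : K, b ^ q ^ n = b ∧
            c₀ * (u ((k:ZMod e) - (j₀:ZMod e))) ^ q ^ (s * j₀) = γ * b) ∧
        (∀ i : ZMod e, k < i.val → c₀ * (u (i - (j₀:ZMod e))) ^ q ^ (s * j₀) = 0) := by
      intro j₀ h1 h2 c₀
      have hmem : T (fun i : ZMod e => c₀ * (u (i - (j₀:ZMod e))) ^ q ^ (s * j₀))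
          ∈ DFun q s n k γ := by
        rw [← hcomp j₀ c₀ u, hTu]
        exact hnuc _ (hmono j₀ h1 h2 c₀)
      exact key _ hmem
    have huzero : ∀ m : ZMod e, m ≠ 0 → u m = 0 := by
      intro m hm
      have hmv : 0 < m.val := by
        rcases Nat.eq_zero_or_pos m.val with h0 | h0
        · exact absurd ((ZMod.val_eq_zero m).mp h0) hm
        · exact h0
      have hmvlt : m.val < e := ZMod.val_lt m
      by_cases hcase1 : m.val < k
      · -- use target index k
        set j₀ := k - m.val with hj₀
        have hj1 : 0 < j₀ := by omega
        have hj2 : j₀ < k := by omega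
        have hmk : (k:ZMod e) - (j₀:ZMod e) = m := by
          rw [← Nat.cast_sub (by omega : j₀ ≤ k)]
          have : k - j₀ = m.val := by omega
          rw [this, ZMod.natCast_rightInverse m]
        by_contra hum
        have hsurj : ∀ y : K, ∃ b : K, b ^ q ^ n = b ∧ y = γ * b := by
          intro y
          obtain ⟨-, h2', -⟩ := hKEY j₀ hj1 hj2 (y / (u m) ^ q ^ (s * j₀))
          rw [hmk] at h2'
          obtain ⟨b, hb1, hb2⟩ := h2'
          exact ⟨b, hb1, by rw [← hb2, div_mul_cancel₀ _ (pow_ne_zero _ hum)]⟩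
        have hle := card_le_of_surj (q ^ n) hqn2 γ hsurj
        rw [hK] at hle
        omega
      · by_cases hcase2 : m.val < e - 1
        · -- use target index m.val + 1 with j₀ = 1
          have h3 := (hKEY 1 one_pos (by omega) 1).2.2 (m + (1:ℕ)) ?_
          · rw [add_sub_cancel_right, one_mul] at h3
            exact (pow_eq_zero_iff (hq_pow_ne (s*1))).mp h3
          · have hcast : (m + ((1:ℕ):ZMod e)) = ((m.val + 1 : ℕ) : ZMod e) := by
              push_cast [ZMod.natCast_val, ZMod.cast_id]
              ring
            rw [hcast, ZMod.val_cast_of_lt (by omega)]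
            omega
        · -- m.val = e - 1 : use target index 0 with j₀ = 1
          have hmval : m.val = e - 1 := by omega
          have hm1 : (0:ZMod e) - ((1:ℕ):ZMod e) = m := by
            rw [sub_eq_iff_eq_add]
            have : m + ((1:ℕ):ZMod e) = ((m.val + 1 : ℕ) : ZMod e) := by
              push_cast [ZMod.natCast_val, ZMod.cast_id]
              ring
            rw [this, (by omega : m.val + 1 = e), ZMod.natCast_self]
          by_contra hum
          have hfix : ∀ y : K, y ^ q ^ n = y := by
            intro y
            obtain ⟨h1', -, -⟩ := hKEY 1 one_pos (by omega) (y / (u m) ^ q ^ (s * 1))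
            rw [hm1, div_mul_cancel₀ _ (pow_ne_zero _ hum)] at h1'
            exact h1'
          have hsurj : ∀ y : K, ∃ b : K, b ^ q ^ n = b ∧ y = (1:K) * b :=
            fun y => ⟨y, hfix y, (one_mul y).symm⟩
          have hle := card_le_of_surj (q ^ n) hqn2 1 hsurj
          rw [hK] at hle
          omega
    refine ⟨u 0, hu0, ?_⟩
    rw [← hTu]
    funext x
    simp only [hT]
    rw [Finset.sum_eq_single 0]
    · rw [mul_zero, ZMod.val_zero, pow_zero, pow_one]
    · intro i _ hi
      rw [huzero i hi, zero_mul]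
    · intro hnm
      exact absurd (Finset.mem_univ _) hnm
  · rintro ⟨a, ha, rfl⟩
    constructor
    · refine ⟨fun i : Fin e => if i = 0 then a else 0, ?_⟩
      funext x
      rw [Finset.sum_eq_single (0 : Fin e)]
      · beta_reduce; rw [if_pos rfl, Fin.val_zero, pow_zero, pow_one]
      · intro i _ hne
        beta_reduce; rw [if_neg hne, zero_mul]
      · intro hnm
        exact absurd (Finset.mem_univ _) hnm
    · rintro f ⟨a', b', ha', hb', c', rfl⟩
      refine ⟨a' * a, b' * a ^ q ^ (s * k), ?_, ?_, fun i => c' i * a ^ q ^ (s * i), ?_⟩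
      · rw [mul_pow, ha', ha]
      · rw [mul_pow, hb', ← pow_mul, mul_comm (q ^ (s*k)), pow_mul, ha]
      · funext x
        simp only [Function.comp_apply]
        have hsum : ∑ i ∈ Finset.Ioo 0 k, c' i * (a * x) ^ q ^ (s * i)
            = ∑ i ∈ Finset.Ioo 0 k, (c' i * a ^ q ^ (s * i)) * x ^ q ^ (s * i) :=
          Finset.sum_congr rfl fun i _ => by rw [mul_pow]; ring
        rw [hsum, mul_pow]
        ring
end
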